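/- arXiv:2211.05893 — 4 statements merged into one kernel-verified Lean document; each statement's English description precedes it below -/
import Mathlib

section
/- Lemma 2.1(i) (mass conservation of the semidiscrete DG scheme): Suppose (u_h, q_h, p_h) together with numerical traces û_h, q̂_h, p̂_h satisfy the semidiscrete DG scheme with zero source. Then the discrete mass is conserved: the function t ↦ Σ_{i=1}^N ∫_{I_i} u_h(x,t) dx is constant on [0,T], i.e. its derivative in t vanishes for every t ∈ [0,T]. -/
open Polynomial Set

noncomputable section

namespace DG

/-- A broken polynomial function in `W_h^k` (before imposing the degree bound):
the polynomial indexed by `i` is the restriction of the function to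
element `I_i = (x (i-1), x i)`, for `i = 1,…,N`. -/
abbrev Broken := ℕ → Polynomial ℝ

/-- Membership in `W_h^k`: every elementwise polynomial has degree at most `k`. -/
def DegLE (k : ℕ) (P : Broken) : Prop := ∀ i, (P i).natDegree ≤ k

/-- `(F, G) = Σ_{i=1}^N ∫_{I_i} F_i G_i dx` for families of functions on the elements. -/
def ip (x : ℕ → ℝ) (N : ℕ) (F G : ℕ → ℝ → ℝ) : ℝ :=
  ∑ i ∈ Finset.Icc 1 N, ∫ y in (x (i-1))..(x i), F i y * G i y

/-- the family of real functions determined by a broken polynomial -/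
def ev (P : Broken) : ℕ → ℝ → ℝ := fun i y => (P i).eval y

/-- elementwise spatial derivative -/
def dx (P : Broken) : Broken := fun i => (P i).derivative

/-- `⟨φ̂, v n⟩ = Σ_{i=1}^N [φ̂(x_i) v(x_i⁻) - φ̂(x_{i-1}) v(x_{i-1}⁺)]` where `φ̂` is a
numerical trace, i.e. a function on the node indices. -/
def bt (x : ℕ → ℝ) (N : ℕ) (φ : ℕ → ℝ) (v : Broken) : ℝ :=
  ∑ i ∈ Finset.Icc 1 N, (φ i * (v i).eval (x i) - φ (i - 1) * (v i).eval (x (i - 1)))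

/-- the one-sided limit `ζ(x_i⁻)` of a broken polynomial at the node `x_i`, `i = 1,…,N` -/
def lv (x : ℕ → ℝ) (P : Broken) (i : ℕ) : ℝ := (P i).eval (x i)

/-- the one-sided limit `ζ(x_i⁺)` at the node `x_i`, with the periodic identification
`ζ(x_N⁺) = ζ(x_0⁺)` -/
def rv (x : ℕ → ℝ) (N : ℕ) (P : Broken) (i : ℕ) : ℝ :=
  if i = N then (P 1).eval (x 0) else (P (i + 1)).eval (x i)

/-- the jump `⟦ζ⟧(x_i) = ζ(x_i⁻) - ζ(x_i⁺)` -/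
def jmp (x : ℕ → ℝ) (N : ℕ) (P : Broken) (i : ℕ) : ℝ := lv x P i - rv x N P i

/-- the average `{ζ}(x_i) = (ζ(x_i⁻) + ζ(x_i⁺))/2` -/
def avg (x : ℕ → ℝ) (N : ℕ) (P : Broken) (i : ℕ) : ℝ := (lv x P i + rv x N P i) / 2

/-- the jump `⟦g(ζ)⟧(x_i)` of a composition `g ∘ ζ` -/
def jmpC (x : ℕ → ℝ) (N : ℕ) (g : ℝ → ℝ) (P : Broken) (i : ℕ) : ℝ :=
  g (lv x P i) - g (rv x N P i)

/-- `η(w,v) = Σ_{i=1}^N ⟦w⟧⟦v⟧(x_i)` -/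
def eta (x : ℕ → ℝ) (N : ℕ) (w v : Broken) : ℝ :=
  ∑ i ∈ Finset.Icc 1 N, jmp x N w i * jmp x N v i

/-- the mesh `a = x 0 < x 1 < ⋯ < x N = b` -/
structure Mesh (a b : ℝ) (N : ℕ) (x : ℕ → ℝ) : Prop where
  hab : a < b
  hN : 1 ≤ N
  left : x 0 = a
  right : x N = b
  mono : ∀ i, i < N → x i < x (i + 1)

/-- `Pf` is the elementwise L²-projection of the function `y ↦ f(ζ(y))` onto `W_h^k`:
it has degree at most `k` and `∫_{I_i} (Pf - f(ζ)) w = 0` for every polynomial `w` of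
degree at most `k` and every element `i`. -/
def IsProj (x : ℕ → ℝ) (N k : ℕ) (f : ℝ → ℝ) (P Pf : Broken) : Prop :=
  DegLE k Pf ∧ ∀ i ∈ Finset.Icc 1 N, ∀ w : Polynomial ℝ, w.natDegree ≤ k →
    (∫ y in (x (i-1))..(x i), ((Pf i).eval y - f ((P i).eval y)) * w.eval y) = 0

/-- a numerical trace takes equal values at the nodes `x_0` and `x_N` -/
def IsTrace (N : ℕ) (φ : ℕ → ℝ) : Prop := φ 0 = φ N

/-- The semidiscrete DG scheme with zero source on `[0,T]`: `u q p : ℝ → Broken`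
are the approximations (depending differentiably on `t`, with time derivatives
`ut qt pt`), and `uh qh ph` are the (possibly `t`-dependent) numerical traces. -/
structure Scheme (x : ℕ → ℝ) (N k : ℕ) (T ε : ℝ) (f : ℝ → ℝ)
    (u q p ut qt pt : ℝ → Broken) (uh qh ph : ℝ → ℕ → ℝ) : Prop where
  degu : ∀ t ∈ Icc (0:ℝ) T, DegLE k (u t)
  degq : ∀ t ∈ Icc (0:ℝ) T, DegLE k (q t)
  degp : ∀ t ∈ Icc (0:ℝ) T, DegLE k (p t)
  degut : ∀ t ∈ Icc (0:ℝ) T, DegLE k (ut t)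
  trace_u : ∀ t ∈ Icc (0:ℝ) T, IsTrace N (uh t)
  trace_q : ∀ t ∈ Icc (0:ℝ) T, IsTrace N (qh t)
  trace_p : ∀ t ∈ Icc (0:ℝ) T, IsTrace N (ph t)
  du : ∀ t ∈ Icc (0:ℝ) T, ∀ i, ∀ y : ℝ,
    HasDerivWithinAt (fun s => ((u s) i).eval y) (((ut t) i).eval y) (Icc (0:ℝ) T) t
  dq : ∀ t ∈ Icc (0:ℝ) T, ∀ i, ∀ y : ℝ,
    HasDerivWithinAt (fun s => ((q s) i).eval y) (((qt t) i).eval y) (Icc (0:ℝ) T) t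
  dp : ∀ t ∈ Icc (0:ℝ) T, ∀ i, ∀ y : ℝ,
    HasDerivWithinAt (fun s => ((p s) i).eval y) (((pt t) i).eval y) (Icc (0:ℝ) T) t
  eq1 : ∀ t ∈ Icc (0:ℝ) T, ∀ v : Broken, DegLE k v →
    ip x N (ev (q t)) (ev v) + ip x N (ev (u t)) (ev (dx v)) - bt x N (uh t) v = 0
  eq2 : ∀ t ∈ Icc (0:ℝ) T, ∀ z : Broken, DegLE k z →
    ip x N (ev (p t)) (ev z) + ε * ip x N (ev (q t)) (ev (dx z)) - ε * bt x N (qh t) z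
      = ip x N (fun i y => f (((u t) i).eval y)) (ev z)
  eq3 : ∀ t ∈ Icc (0:ℝ) T, ∀ w : Broken, DegLE k w →
    ip x N (ev (ut t)) (ev w) - ip x N (ev (p t)) (ev (dx w)) + bt x N (ph t) w = 0

end DG


section Aux

lemma telescope (N : ℕ) (g : ℕ → ℝ) :
    ∑ i ∈ Finset.Icc 1 N, (g i - g (i-1)) = g N - g 0 := by
  induction N with
  | zero => simp
  | succ n ih =>
    rw [Finset.sum_Icc_succ_top (Nat.le_add_left 1 n), ih]
    simp

lemma quad (k : ℕ) (A B : ℝ) : ∃ v c : Fin (k+1) → ℝ,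
    ∀ P : Polynomial ℝ, P.natDegree ≤ k →
      (∫ y in A..B, P.eval y) = ∑ j, c j * P.eval (v j) := by
  set v : Fin (k+1) → ℝ := fun j => ((j : ℕ) : ℝ) with hvdef
  refine ⟨v, fun j => ∫ y in A..B, (Lagrange.basis Finset.univ v j).eval y, ?_⟩
  intro P hP
  have hv : Set.InjOn v (Finset.univ : Finset (Fin (k+1))) := by
    intro a _ b _ h
    simp only [hvdef] at h
    exact Fin.ext (by exact_mod_cast h)
  have hdeg : P.degree < (Finset.univ : Finset (Fin (k+1))).card := by
    rw [Finset.card_univ, Fintype.card_fin]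
    exact lt_of_le_of_lt (Polynomial.natDegree_le_iff_degree_le.mp hP)
      (by exact_mod_cast Nat.lt_succ_self k)
  conv_lhs => rw [Lagrange.eq_interpolate hv hdeg, Lagrange.interpolate_apply]
  rw [intervalIntegral.integral_congr (g := fun y => ∑ j : Fin (k+1),
      P.eval (v j) * (Lagrange.basis Finset.univ v j).eval y)
      (fun y _ => by simp [Polynomial.eval_finset_sum])]
  have hsum := intervalIntegral.integral_finset_sum (μ := MeasureTheory.volume)
      (a := A) (b := B) (s := (Finset.univ : Finset (Fin (k+1))))
      (f := fun j y => P.eval (v j) * (Lagrange.basis Finset.univ v j).eval y)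
      (fun j _ => (Continuous.intervalIntegrable
        (continuous_const.mul (Lagrange.basis Finset.univ v j).continuous) A B))
  rw [hsum]
  simp [intervalIntegral.integral_const_mul, mul_comm]

end Aux

/-- Lemma 2.1(i): mass conservation of the semidiscrete DG scheme with zero source. -/
theorem dg_mass_conservation
    (a b : ℝ) (N k : ℕ) (x : ℕ → ℝ) (hmesh : DG.Mesh a b N x)
    (T ε : ℝ) (hT : 0 < T) (f : ℝ → ℝ) (hf : Continuous f)
    (u q p ut qt pt : ℝ → DG.Broken) (uh qh ph : ℝ → ℕ → ℝ)
    (hS : DG.Scheme x N k T ε f u q p ut qt pt uh qh ph) :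
    ∀ t ∈ Set.Icc (0:ℝ) T,
      HasDerivWithinAt
        (fun s => ∑ i ∈ Finset.Icc 1 N, ∫ y in (x (i-1))..(x i), ((u s) i).eval y)
        0 (Set.Icc (0:ℝ) T) t := by
  intro t ht
  have hmain : ∀ i ∈ Finset.Icc 1 N,
      HasDerivWithinAt (fun s => ∫ y in (x (i-1))..(x i), ((u s) i).eval y)
        (∫ y in (x (i-1))..(x i), ((ut t) i).eval y) (Set.Icc (0:ℝ) T) t := by
    intro i _
    obtain ⟨v, c, hq⟩ := quad k (x (i-1)) (x i)
    have h1 : HasDerivWithinAt (fun s => ∑ j, c j * ((u s) i).eval (v j))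
        (∑ j, c j * ((ut t) i).eval (v j)) (Set.Icc (0:ℝ) T) t :=
      HasDerivWithinAt.fun_sum (fun j _ =>
        HasDerivWithinAt.const_mul (c j) (hS.du t ht i (v j)))
    have h2 := h1.congr (fun s hs => hq _ (hS.degu s hs i)) (hq _ (hS.degu t ht i))
    rw [hq _ (hS.degut t ht i)]
    exact h2
  have hD := HasDerivWithinAt.fun_sum hmain
  have hz : ∑ i ∈ Finset.Icc 1 N, ∫ y in (x (i-1))..(x i), ((ut t) i).eval y = 0 := by
    have h3 := hS.eq3 t ht (fun _ => 1) (fun i => by simp)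
    simp only [DG.ip, DG.ev, DG.dx, DG.bt, Polynomial.eval_one, mul_one,
      Polynomial.derivative_one, Polynomial.eval_zero, mul_zero,
      intervalIntegral.integral_zero, Finset.sum_const_zero, sub_zero] at h3
    rw [telescope N (ph t)] at h3
    have htr := hS.trace_p t ht
    unfold DG.IsTrace at htr
    linarith [h3]
  rw [hz] at hD
  exact hD
end
end

section
/- Lemma 2.1(ii) (energy conservation of the semidiscrete DG scheme): Suppose (u_h, q_h, p_h) together with numerical traces û_h, q̂_h, p̂_h satisfy the semidiscrete DG scheme with zero source, and assume that for every t ∈ [0,T] the traces satisfy the condition 0 = Σ_{i=1}^N ( ⟦V(u_h)⟧ − {Π f(u_h)} ⟦u_h⟧ + (⟦Π f(u_h)⟧ − ⟦p_h⟧)(û_h − {u_h}) − ⟦u_h⟧(p̂_h − {p_h}) + ε ⟦q_h⟧(q̂_h − {q_h}) )(x_i). Then the discrete energy is conserved: t ↦ Σ_{i=1}^N ∫_{I_i} u_h(x,t)² dx is constant on [0,T]. -/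
open Polynomial Set

noncomputable section

namespace DGproof

open Polynomial Set DG

/-- reindexing lemma -/
lemma sum_shift (N : ℕ) (hN : 1 ≤ N) (c : ℕ → ℝ) :
    ∑ i ∈ Finset.Icc 1 N, c (i - 1)
      = ∑ i ∈ Finset.Icc 1 N, (if i = N then c 0 else c i) := by
  have h1 : ∑ i ∈ Finset.Icc 1 N, c (i - 1) = ∑ i ∈ Finset.range N, c i := by
    rw [← Finset.Ico_add_one_right_eq_Icc, Finset.sum_Ico_eq_sum_range]
    simp
  have herase : (Finset.Icc 1 N).erase N = Finset.Icc 1 (N-1) := by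
    ext j
    simp only [Finset.mem_erase, Finset.mem_Icc]
    omega
  have hNmem : N ∈ Finset.Icc 1 N := by simp [hN]
  have h2 : (∑ i ∈ Finset.Icc 1 N, if i = N then c 0 else c i)
      = c 0 + ∑ i ∈ Finset.Icc 1 (N - 1), c i := by
    rw [← Finset.add_sum_erase _ _ hNmem, if_pos rfl, herase]
    congr 1
    apply Finset.sum_congr rfl
    intro j hj
    simp only [Finset.mem_Icc] at hj
    rw [if_neg (by omega)]
  rw [h1, h2]
  have h3 : Finset.range N = insert 0 (Finset.Icc 1 (N-1)) := by
    ext j; simp only [Finset.mem_range, Finset.mem_insert, Finset.mem_Icc]; omega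
  rw [h3, Finset.sum_insert (by simp)]

/-- boundary trace sum with a periodic numerical trace, as a sum of jumps -/
lemma bt_eq (x : ℕ → ℝ) (N : ℕ) (hN : 1 ≤ N) (φ : ℕ → ℝ) (hφ : IsTrace N φ)
    (v : Broken) : bt x N φ v = ∑ i ∈ Finset.Icc 1 N, φ i * jmp x N v i := by
  unfold bt jmp lv rv
  rw [Finset.sum_sub_distrib]
  have := sum_shift N hN (fun j => φ j * (v (j+1)).eval (x j))
  beta_reduce at this
  have hc : ∀ i ∈ Finset.Icc 1 N, φ (i-1) * (v i).eval (x (i-1))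
      = (fun j => φ j * (v (j+1)).eval (x j)) (i-1) := by
    intro i hi
    simp only [Finset.mem_Icc] at hi
    have : i - 1 + 1 = i := by omega
    simp [this]
  rw [Finset.sum_congr rfl hc, this]
  rw [← Finset.sum_sub_distrib]
  refine Finset.sum_congr rfl fun i hi => ?_
  by_cases h : i = N
  · simp only [h, if_pos rfl, zero_add]
    simp only [if_true]
    rw [hφ]; ring
  · rw [if_neg h, if_neg h]; ring


/-- telescoping node-sum lemma -/
lemma tele (x : ℕ → ℝ) (N : ℕ) (hN : 1 ≤ N) (g : ℕ → ℝ → ℝ) :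
    ∑ i ∈ Finset.Icc 1 N, (g i (x i) - g i (x (i-1)))
      = ∑ i ∈ Finset.Icc 1 N, (g i (x i) - if i = N then g 1 (x 0) else g (i+1) (x i)) := by
  rw [Finset.sum_sub_distrib, Finset.sum_sub_distrib]
  congr 1
  have key := sum_shift N hN (fun j => g (j+1) (x j))
  have hc : ∀ i ∈ Finset.Icc 1 N, g i (x (i-1)) = (fun j => g (j+1) (x j)) (i-1) := by
    intro i hi; simp only [Finset.mem_Icc] at hi
    have h1 : i - 1 + 1 = i := by omega
    simp [h1]
  rw [Finset.sum_congr rfl hc, key]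

lemma ftc_mul (P Q : Polynomial ℝ) (α β : ℝ) :
    (∫ y in α..β, (P.eval y * Q.derivative.eval y + P.derivative.eval y * Q.eval y))
      = P.eval β * Q.eval β - P.eval α * Q.eval α := by
  apply intervalIntegral.integral_eq_sub_of_hasDerivAt
  · intro y _
    have h := (P.hasDerivAt y).mul (Q.hasDerivAt y)
    exact h.congr_deriv (by ring)
  · exact ((P.continuous.mul Q.derivative.continuous).add
      (P.derivative.continuous.mul Q.continuous)).intervalIntegrable _ _

lemma ftc_comp (f V : ℝ → ℝ) (hf : Continuous f) (hV : ∀ y, HasDerivAt V (f y) y)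
    (P : Polynomial ℝ) (α β : ℝ) :
    (∫ y in α..β, f (P.eval y) * P.derivative.eval y)
      = V (P.eval β) - V (P.eval α) := by
  apply intervalIntegral.integral_eq_sub_of_hasDerivAt
  · intro y _
    exact (hV (P.eval y)).comp y (P.hasDerivAt y)
  · apply Continuous.intervalIntegrable
    exact (hf.comp P.continuous).mul P.derivative.continuous

lemma ftc_sq (P : Polynomial ℝ) (α β : ℝ) :
    (∫ y in α..β, P.eval y * P.derivative.eval y)
      = (P.eval β ^ 2 - P.eval α ^ 2) / 2 := by
  have h : (∫ y in α..β, P.eval y * P.derivative.eval y)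
      = ((fun y => P.eval y ^ 2 / 2) β - (fun y => P.eval y ^ 2 / 2) α) := by
    apply intervalIntegral.integral_eq_sub_of_hasDerivAt
    · intro y _
      have h := ((P.hasDerivAt y).pow 2).div_const 2
      exact h.congr_deriv (by push_cast; ring)
    · exact (P.continuous.mul P.derivative.continuous).intervalIntegrable _ _
  rw [h]; ring


lemma ip_comm (x : ℕ → ℝ) (N : ℕ) (F G : ℕ → ℝ → ℝ) : ip x N F G = ip x N G F := by
  unfold ip
  refine Finset.sum_congr rfl fun i _ => ?_
  exact intervalIntegral.integral_congr (fun y _ => mul_comm _ _)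

lemma ip_parts (x : ℕ → ℝ) (N : ℕ) (hN : 1 ≤ N) (P Q : Broken) :
    ip x N (ev P) (ev (dx Q)) + ip x N (ev (dx P)) (ev Q)
      = ∑ i ∈ Finset.Icc 1 N, (lv x P i * lv x Q i - rv x N P i * rv x N Q i) := by
  unfold ip ev dx
  rw [← Finset.sum_add_distrib]
  have h1 : ∀ i ∈ Finset.Icc 1 N,
      ((∫ y in (x (i-1))..(x i), (P i).eval y * (Q i).derivative.eval y)
        + ∫ y in (x (i-1))..(x i), (P i).derivative.eval y * (Q i).eval y)
      = (P i).eval (x i) * (Q i).eval (x i) - (P i).eval (x (i-1)) * (Q i).eval (x (i-1)) := by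
    intro i _
    rw [← intervalIntegral.integral_add (f := fun y => (P i).eval y * (Q i).derivative.eval y)
      (g := fun y => (P i).derivative.eval y * (Q i).eval y)
      (((P i).continuous.mul (Q i).derivative.continuous).intervalIntegrable _ _)
      (((P i).derivative.continuous.mul (Q i).continuous).intervalIntegrable _ _)]
    exact ftc_mul (P i) (Q i) _ _
  rw [Finset.sum_congr rfl h1, tele x N hN (fun j z => (P j).eval z * (Q j).eval z)]
  refine Finset.sum_congr rfl fun i _ => ?_
  unfold lv rv
  by_cases h : i = N <;> simp [h]

lemma ip_sq (x : ℕ → ℝ) (N : ℕ) (hN : 1 ≤ N) (Q : Broken) :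
    ip x N (ev Q) (ev (dx Q))
      = ∑ i ∈ Finset.Icc 1 N, (lv x Q i ^ 2 - rv x N Q i ^ 2) / 2 := by
  unfold ip ev dx
  have h1 : ∀ i ∈ Finset.Icc 1 N,
      (∫ y in (x (i-1))..(x i), (Q i).eval y * (Q i).derivative.eval y)
      = (Q i).eval (x i) ^ 2 / 2 - (Q i).eval (x (i-1)) ^ 2 / 2 := by
    intro i _
    rw [ftc_sq (Q i) _ _]; ring
  rw [Finset.sum_congr rfl h1, tele x N hN (fun j z => (Q j).eval z ^ 2 / 2)]
  refine Finset.sum_congr rfl fun i _ => ?_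
  unfold lv rv
  by_cases h : i = N <;> simp [h] <;> ring

lemma ip_V (x : ℕ → ℝ) (N : ℕ) (hN : 1 ≤ N) (f V : ℝ → ℝ) (hf : Continuous f)
    (hV : ∀ y, HasDerivAt V (f y) y) (P : Broken) :
    ip x N (fun i y => f ((P i).eval y)) (ev (dx P))
      = ∑ i ∈ Finset.Icc 1 N, jmpC x N V P i := by
  unfold ip ev dx
  have h1 : ∀ i ∈ Finset.Icc 1 N,
      (∫ y in (x (i-1))..(x i), f ((P i).eval y) * (P i).derivative.eval y)
      = V ((P i).eval (x i)) - V ((P i).eval (x (i-1))) := by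
    intro i _
    exact ftc_comp f V hf hV (P i) _ _
  rw [Finset.sum_congr rfl h1, tele x N hN (fun j z => V ((P j).eval z))]
  refine Finset.sum_congr rfl fun i _ => ?_
  unfold jmpC lv rv
  by_cases h : i = N <;> simp [h]

lemma proj_swap (x : ℕ → ℝ) (N kk : ℕ) (f : ℝ → ℝ) (hf : Continuous f)
    (u Pf : Broken) (h : IsProj x N kk f u Pf) (w : Broken) (hw : DegLE kk w) :
    ip x N (ev Pf) (ev w) = ip x N (fun i y => f ((u i).eval y)) (ev w) := by
  unfold ip ev
  refine Finset.sum_congr rfl fun i hi => ?_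
  have h0 := h.2 i hi (w i) (hw i)
  have h2 : (∫ y in (x (i-1))..(x i), ((Pf i).eval y - f ((u i).eval y)) * (w i).eval y)
      = (∫ y in (x (i-1))..(x i), (Pf i).eval y * (w i).eval y)
        - ∫ y in (x (i-1))..(x i), f ((u i).eval y) * (w i).eval y := by
    have hc1 : Continuous fun y : ℝ => (Pf i).eval y * (w i).eval y :=
      (Pf i).continuous.mul (w i).continuous
    have hc2 : Continuous fun y : ℝ => f ((u i).eval y) * (w i).eval y :=
      (hf.comp (u i).continuous).mul (w i).continuous
    rw [← intervalIntegral.integral_sub (hc1.intervalIntegrable _ _) (hc2.intervalIntegrable _ _)]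
    refine intervalIntegral.integral_congr fun y _ => ?_
    ring
  rw [h2] at h0
  linarith


/-- Lagrange basis polynomials on the nodes `0,1,…,k`. -/
def Bk (k j : ℕ) : Polynomial ℝ := Lagrange.basis (Finset.range (k+1)) (fun n => (n:ℝ)) j

lemma eval_expand (k : ℕ) (P : Polynomial ℝ) (hP : P.natDegree ≤ k) (y : ℝ) :
    P.eval y = ∑ j ∈ Finset.range (k+1), P.eval (j:ℝ) * (Bk k j).eval y := by
  have hinj : Set.InjOn (fun n : ℕ => (n:ℝ)) (Finset.range (k+1)) :=
    fun a _ b _ h => Nat.cast_injective h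
  have hdeg : P.degree < (Finset.range (k+1)).card := by
    rw [Finset.card_range]
    exact lt_of_le_of_lt P.degree_le_natDegree (by exact_mod_cast Nat.lt_succ_of_le hP)
  conv_lhs => rw [Lagrange.eq_interpolate hinj hdeg]
  rw [Lagrange.interpolate_apply, Polynomial.eval_finset_sum]
  simp [Bk]

lemma integral_mul_expand (k : ℕ) (P Q : Polynomial ℝ) (hP : P.natDegree ≤ k)
    (hQ : Q.natDegree ≤ k) (α β : ℝ) :
    (∫ y in α..β, P.eval y * Q.eval y)
      = ∑ j ∈ Finset.range (k+1), ∑ l ∈ Finset.range (k+1),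
          P.eval (j:ℝ) * Q.eval (l:ℝ) * ∫ y in α..β, (Bk k j).eval y * (Bk k l).eval y := by
  have h1 : ∀ y : ℝ, P.eval y * Q.eval y
      = ∑ j ∈ Finset.range (k+1), ∑ l ∈ Finset.range (k+1),
          P.eval (j:ℝ) * Q.eval (l:ℝ) * ((Bk k j).eval y * (Bk k l).eval y) := by
    intro y
    rw [eval_expand k P hP y, eval_expand k Q hQ y, Finset.sum_mul_sum]
    refine Finset.sum_congr rfl fun j _ => Finset.sum_congr rfl fun l _ => ?_
    ring
  have h2 : (∫ y in α..β, P.eval y * Q.eval y)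
      = ∫ y in α..β, ∑ j ∈ Finset.range (k+1), ∑ l ∈ Finset.range (k+1),
          P.eval (j:ℝ) * Q.eval (l:ℝ) * ((Bk k j).eval y * (Bk k l).eval y) :=
    intervalIntegral.integral_congr fun y _ => h1 y
  rw [h2, intervalIntegral.integral_finset_sum]
  · refine Finset.sum_congr rfl fun j _ => ?_
    rw [intervalIntegral.integral_finset_sum]
    · exact Finset.sum_congr rfl fun l _ => intervalIntegral.integral_const_mul _ _
    · intro l _
      apply Continuous.intervalIntegrable
      exact continuous_const.mul ((Bk k j).continuous.mul (Bk k l).continuous)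
  · intro j _
    apply Continuous.intervalIntegrable
    exact continuous_finset_sum _ fun l _ =>
      continuous_const.mul ((Bk k j).continuous.mul (Bk k l).continuous)


lemma energy_deriv (x : ℕ → ℝ) (N k : ℕ) (T : ℝ) (u ut : ℝ → Broken)
    (hdegu : ∀ t ∈ Icc (0:ℝ) T, DegLE k (u t))
    (hdegut : ∀ t ∈ Icc (0:ℝ) T, DegLE k (ut t))
    (hdu : ∀ t ∈ Icc (0:ℝ) T, ∀ i, ∀ y : ℝ,
      HasDerivWithinAt (fun s => ((u s) i).eval y) (((ut t) i).eval y) (Icc (0:ℝ) T) t)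
    (t : ℝ) (ht : t ∈ Icc (0:ℝ) T) :
    HasDerivWithinAt (fun s => ip x N (ev (u s)) (ev (u s)))
      (ip x N (ev (ut t)) (ev (u t)) + ip x N (ev (u t)) (ev (ut t)))
      (Icc (0:ℝ) T) t := by
  set M : ℕ → ℕ → ℕ → ℝ := fun i j l =>
    ∫ y in (x (i-1))..(x i), (Bk k j).eval y * (Bk k l).eval y with hM
  set F : ℝ → ℝ := fun s => ∑ i ∈ Finset.Icc 1 N, ∑ j ∈ Finset.range (k+1),
    ∑ l ∈ Finset.range (k+1),
      ((u s) i).eval (j:ℝ) * ((u s) i).eval (l:ℝ) * M i j l with hFdef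
  have hF : ∀ s ∈ Icc (0:ℝ) T, ip x N (ev (u s)) (ev (u s)) = F s := by
    intro s hs
    unfold ip ev
    exact Finset.sum_congr rfl fun i _ =>
      integral_mul_expand k ((u s) i) ((u s) i) (hdegu s hs i) (hdegu s hs i) _ _
  have hF' : HasDerivWithinAt F
      (∑ i ∈ Finset.Icc 1 N, ∑ j ∈ Finset.range (k+1), ∑ l ∈ Finset.range (k+1),
        (((ut t) i).eval (j:ℝ) * ((u t) i).eval (l:ℝ)
          + ((u t) i).eval (j:ℝ) * ((ut t) i).eval (l:ℝ)) * M i j l)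
      (Icc (0:ℝ) T) t := by
    apply HasDerivWithinAt.fun_sum
    intro i _
    apply HasDerivWithinAt.fun_sum
    intro j _
    apply HasDerivWithinAt.fun_sum
    intro l _
    exact ((hdu t ht i (j:ℝ)).mul (hdu t ht i (l:ℝ))).mul_const (M i j l)
  have hval : (∑ i ∈ Finset.Icc 1 N, ∑ j ∈ Finset.range (k+1), ∑ l ∈ Finset.range (k+1),
        (((ut t) i).eval (j:ℝ) * ((u t) i).eval (l:ℝ)
          + ((u t) i).eval (j:ℝ) * ((ut t) i).eval (l:ℝ)) * M i j l)
      = ip x N (ev (ut t)) (ev (u t)) + ip x N (ev (u t)) (ev (ut t)) := by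
    have e1 : ip x N (ev (ut t)) (ev (u t)) = ∑ i ∈ Finset.Icc 1 N,
        ∑ j ∈ Finset.range (k+1), ∑ l ∈ Finset.range (k+1),
          ((ut t) i).eval (j:ℝ) * ((u t) i).eval (l:ℝ) * M i j l := by
      unfold ip ev
      exact Finset.sum_congr rfl fun i _ =>
        integral_mul_expand k ((ut t) i) ((u t) i) (hdegut t ht i) (hdegu t ht i) _ _
    have e2 : ip x N (ev (u t)) (ev (ut t)) = ∑ i ∈ Finset.Icc 1 N,
        ∑ j ∈ Finset.range (k+1), ∑ l ∈ Finset.range (k+1),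
          ((u t) i).eval (j:ℝ) * ((ut t) i).eval (l:ℝ) * M i j l := by
      unfold ip ev
      exact Finset.sum_congr rfl fun i _ =>
        integral_mul_expand k ((u t) i) ((ut t) i) (hdegu t ht i) (hdegut t ht i) _ _
    rw [e1, e2, ← Finset.sum_add_distrib]
    refine Finset.sum_congr rfl fun i _ => ?_
    rw [← Finset.sum_add_distrib]
    refine Finset.sum_congr rfl fun j _ => ?_
    rw [← Finset.sum_add_distrib]
    refine Finset.sum_congr rfl fun l _ => ?_
    ring
  rw [← hval]
  exact hF'.congr hF (hF t ht)

end DGproof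
/-- Lemma 2.1(ii): energy conservation of the semidiscrete DG scheme with zero source,
under the trace condition (2.6). -/
theorem dg_energy_conservation
    (a b : ℝ) (N k : ℕ) (x : ℕ → ℝ) (hmesh : DG.Mesh a b N x)
    (T ε : ℝ) (hT : 0 < T) (f V : ℝ → ℝ) (hf : Continuous f)
    (hV : ∀ y : ℝ, HasDerivAt V (f y) y)
    (u q p ut qt pt : ℝ → DG.Broken) (uh qh ph : ℝ → ℕ → ℝ)
    (hS : DG.Scheme x N k T ε f u q p ut qt pt uh qh ph)
    (Pf : ℝ → DG.Broken)
    (hPf : ∀ t ∈ Set.Icc (0:ℝ) T, DG.IsProj x N k f (u t) (Pf t))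
    (hcond : ∀ t ∈ Set.Icc (0:ℝ) T,
      0 = ∑ i ∈ Finset.Icc 1 N,
        (DG.jmpC x N V (u t) i - DG.avg x N (Pf t) i * DG.jmp x N (u t) i
          + (DG.jmp x N (Pf t) i - DG.jmp x N (p t) i) * (uh t i - DG.avg x N (u t) i)
          - DG.jmp x N (u t) i * (ph t i - DG.avg x N (p t) i)
          + ε * DG.jmp x N (q t) i * (qh t i - DG.avg x N (q t) i))) :
    ∀ t₁ ∈ Set.Icc (0:ℝ) T, ∀ t₂ ∈ Set.Icc (0:ℝ) T,
      (∑ i ∈ Finset.Icc 1 N, ∫ y in (x (i-1))..(x i), ((u t₁) i).eval y ^ 2)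
        = ∑ i ∈ Finset.Icc 1 N, ∫ y in (x (i-1))..(x i), ((u t₂) i).eval y ^ 2 := by
  intro t₁ ht₁ t₂ ht₂
  have hN : 1 ≤ N := hmesh.hN
  set E : ℝ → ℝ := fun s => DG.ip x N (DG.ev (u s)) (DG.ev (u s)) with hEdef
  -- Step 1: the inner product (u_t, u) vanishes for every t.
  have hkey : ∀ t ∈ Set.Icc (0:ℝ) T, DG.ip x N (DG.ev (ut t)) (DG.ev (u t)) = 0 := by
    intro t ht
    have e3 := hS.eq3 t ht (u t) (hS.degu t ht)
    have e1p := hS.eq1 t ht (p t) (hS.degp t ht)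
    have e2q := hS.eq2 t ht (q t) (hS.degq t ht)
    have e1f := hS.eq1 t ht (Pf t) ((hPf t ht).1)
    have parts_pu := DGproof.ip_parts x N hN (p t) (u t)
    have parts_uf := DGproof.ip_parts x N hN (u t) (Pf t)
    have sqq := DGproof.ip_sq x N hN (q t)
    have vV := DGproof.ip_V x N hN f V hf hV (u t)
    have dxudeg : DG.DegLE k (DG.dx (u t)) := fun i =>
      (Polynomial.natDegree_derivative_le _).trans
        ((Nat.sub_le _ 1).trans (hS.degu t ht i))
    have projq := DGproof.proj_swap x N k f hf (u t) (Pf t) (hPf t ht) (q t) (hS.degq t ht)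
    have projdxu := DGproof.proj_swap x N k f hf (u t) (Pf t) (hPf t ht) (DG.dx (u t)) dxudeg
    have btu := DGproof.bt_eq x N hN (ph t) (hS.trace_p t ht) (u t)
    have btp := DGproof.bt_eq x N hN (uh t) (hS.trace_u t ht) (p t)
    have btf := DGproof.bt_eq x N hN (uh t) (hS.trace_u t ht) (Pf t)
    have btq := DGproof.bt_eq x N hN (qh t) (hS.trace_q t ht) (q t)
    have c1 := DGproof.ip_comm x N (DG.ev (DG.dx (p t))) (DG.ev (u t))
    have c2 := DGproof.ip_comm x N (DG.ev (q t)) (DG.ev (p t))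
    have c3 := DGproof.ip_comm x N (DG.ev (q t)) (DG.ev (Pf t))
    have c4 := DGproof.ip_comm x N (DG.ev (DG.dx (u t))) (DG.ev (Pf t))
    have hc := hcond t ht
    have hmerge : (∑ i ∈ Finset.Icc 1 N,
        (DG.jmpC x N V (u t) i - DG.avg x N (Pf t) i * DG.jmp x N (u t) i
          + (DG.jmp x N (Pf t) i - DG.jmp x N (p t) i) * (uh t i - DG.avg x N (u t) i)
          - DG.jmp x N (u t) i * (ph t i - DG.avg x N (p t) i)
          + ε * DG.jmp x N (q t) i * (qh t i - DG.avg x N (q t) i)))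
      = (∑ i ∈ Finset.Icc 1 N,
            (DG.lv x (p t) i * DG.lv x (u t) i - DG.rv x N (p t) i * DG.rv x N (u t) i))
        - (∑ i ∈ Finset.Icc 1 N, ph t i * DG.jmp x N (u t) i)
        - (∑ i ∈ Finset.Icc 1 N, uh t i * DG.jmp x N (p t) i)
        + (∑ i ∈ Finset.Icc 1 N, uh t i * DG.jmp x N (Pf t) i)
        - (∑ i ∈ Finset.Icc 1 N,
            (DG.lv x (u t) i * DG.lv x (Pf t) i - DG.rv x N (u t) i * DG.rv x N (Pf t) i))
        + (∑ i ∈ Finset.Icc 1 N, DG.jmpC x N V (u t) i)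
        - ε * (∑ i ∈ Finset.Icc 1 N, (DG.lv x (q t) i ^ 2 - DG.rv x N (q t) i ^ 2) / 2)
        + ε * (∑ i ∈ Finset.Icc 1 N, qh t i * DG.jmp x N (q t) i) := by
      rw [Finset.mul_sum, Finset.mul_sum]
      simp only [← Finset.sum_sub_distrib, ← Finset.sum_add_distrib]
      refine Finset.sum_congr rfl fun i _ => ?_
      simp only [DG.jmp, DG.avg, DG.jmpC]
      ring
    rw [btu] at e3
    rw [btp] at e1p
    rw [btq, sqq] at e2q
    rw [btf] at e1f
    rw [c1] at parts_pu
    rw [c4, projdxu, vV] at parts_uf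
    linarith [e3, e1p, e2q, e1f, parts_pu, parts_uf, hc, hmerge, c2, c3, projq]
  -- Step 2: E has zero derivative on [0,T].
  have hzero : ∀ t ∈ Set.Icc (0:ℝ) T, HasDerivWithinAt E 0 (Set.Icc (0:ℝ) T) t := by
    intro t ht
    have hd := DGproof.energy_deriv x N k T u ut hS.degu hS.degut hS.du t ht
    have h0 : DG.ip x N (DG.ev (ut t)) (DG.ev (u t))
        + DG.ip x N (DG.ev (u t)) (DG.ev (ut t)) = 0 := by
      rw [DGproof.ip_comm x N (DG.ev (u t)) (DG.ev (ut t))]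
      rw [hkey t ht]; ring
    rw [h0] at hd
    exact hd
  -- Step 3: E is constant.
  have hconst : ∀ s ∈ Set.Icc (0:ℝ) T, E s = E 0 := by
    apply constant_of_has_deriv_right_zero
    · exact fun s hs => (hzero s hs).continuousWithinAt
    · intro s hs
      exact (hzero s (Set.mem_Icc_of_Ico hs)).mono_of_mem_nhdsWithin
        (Icc_mem_nhdsGE_of_mem hs)
  -- Step 4: rewrite the energy.
  have hE : ∀ s : ℝ, (∑ i ∈ Finset.Icc 1 N, ∫ y in (x (i-1))..(x i), ((u s) i).eval y ^ 2)
      = E s := by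
    intro s
    refine Finset.sum_congr rfl fun i _ => ?_
    refine intervalIntegral.integral_congr fun y _ => ?_
    simp [DG.ev, pow_two]
  rw [hE t₁, hE t₂, hconst t₁ ht₁, hconst t₂ ht₂]
end
end

section
/- Lemma 2.1(iii) (Hamiltonian conservation of the semidiscrete DG scheme): Suppose (u_h, q_h, p_h) together with numerical traces û_h, q̂_h, p̂_h satisfy the semidiscrete DG scheme with zero source, that û_h and q_h depend differentiably on t, and that for every t ∈ [0,T] the traces satisfy the condition 0 = Σ_{i=1}^N ( ⟦p_h⟧(p̂_h − {p_h}) + ε ⟦q_h⟧ ∂_t(û_h − {u_h}) + ε ∂_t⟦u_h⟧ (q̂_h − {q_h}) )(x_i). Then the discrete Hamiltonian is conserved: t ↦ Σ_{i=1}^N ∫_{I_i} ( (ε/2) q_h(x,t)² − V(u_h(x,t)) ) dx is constant on [0,T]. -/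
open Polynomial Set

noncomputable section

set_option linter.unusedVariables false

open Filter Topology Interval

namespace DGAux

/-- Lagrange basis polynomials at nodes `0,1,…,n`. -/
def lb (n m : ℕ) : Polynomial ℝ :=
  Lagrange.basis (Finset.range (n+1)) (fun j : ℕ => (j : ℝ)) m

lemma injOn_cast (n : ℕ) : Set.InjOn (fun j : ℕ => (j:ℝ)) (Finset.range (n+1)) :=
  fun a _ b _ h => Nat.cast_injective h

lemma natDegree_lb {n m : ℕ} (hm : m ∈ Finset.range (n+1)) : (lb n m).natDegree ≤ n := by
  rw [lb, Lagrange.natDegree_basis (injOn_cast n) hm, Finset.card_range]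
  omega

lemma rep {n : ℕ} {R : Polynomial ℝ} (hR : R.natDegree ≤ n) :
    R = ∑ m ∈ Finset.range (n+1), Polynomial.C (R.eval (m:ℝ)) * lb n m := by
  have hd : R.degree < ((Finset.range (n+1)).card : WithBot ℕ) := by
    rw [Finset.card_range]
    exact lt_of_le_of_lt Polynomial.degree_le_natDegree
      (by exact_mod_cast Nat.lt_succ_of_le hR)
  have h := Lagrange.eq_interpolate (f := R) (injOn_cast n) hd
  rw [Lagrange.interpolate_apply] at h
  exact h

lemma rep_eval {n : ℕ} {R : Polynomial ℝ} (hR : R.natDegree ≤ n) (y : ℝ) :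
    R.eval y = ∑ m ∈ Finset.range (n+1), R.eval (m:ℝ) * (lb n m).eval y := by
  conv_lhs => rw [rep hR]
  simp [Polynomial.eval_finset_sum]





variable {S : Set ℝ} {t : ℝ}

lemma derivPoly_eq_interp (hud : UniqueDiffWithinAt ℝ S t) (ht : t ∈ S)
    {n : ℕ} {g : ℝ → Polynomial ℝ} {Q : Polynomial ℝ}
    (hdeg : ∀ s ∈ S, (g s).natDegree ≤ n)
    (hd : ∀ y : ℝ, HasDerivWithinAt (fun s => (g s).eval y) (Q.eval y) S t) :
    Q = ∑ m ∈ Finset.range (n+1), Polynomial.C (Q.eval (m:ℝ)) * lb n m := by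
  apply Polynomial.funext
  intro y
  have hF : HasDerivWithinAt
      (fun s => ∑ m ∈ Finset.range (n+1), (g s).eval (m:ℝ) * (lb n m).eval y)
      (∑ m ∈ Finset.range (n+1), Q.eval (m:ℝ) * (lb n m).eval y) S t :=
    HasDerivWithinAt.fun_sum (fun m _ => (hd (m:ℝ)).mul_const _)
  have hcongr : HasDerivWithinAt (fun s => (g s).eval y)
      (∑ m ∈ Finset.range (n+1), Q.eval (m:ℝ) * (lb n m).eval y) S t := by
    apply hF.congr
    · intro s hs; exact rep_eval (hdeg s hs) y
    · exact rep_eval (hdeg t ht) y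
  have := UniqueDiffWithinAt.eq_deriv S hud (hd y) hcongr
  rw [this]
  simp [Polynomial.eval_finset_sum]

lemma derivPoly_natDegree_le (hud : UniqueDiffWithinAt ℝ S t) (ht : t ∈ S)
    {n : ℕ} {g : ℝ → Polynomial ℝ} {Q : Polynomial ℝ}
    (hdeg : ∀ s ∈ S, (g s).natDegree ≤ n)
    (hd : ∀ y : ℝ, HasDerivWithinAt (fun s => (g s).eval y) (Q.eval y) S t) :
    Q.natDegree ≤ n := by
  rw [derivPoly_eq_interp hud ht hdeg hd]
  apply Polynomial.natDegree_sum_le_of_forall_le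
  intro m hm
  exact le_trans (Polynomial.natDegree_C_mul_le _ _) (natDegree_lb hm)

/-- differentiating `s ↦ ∫ (g s)·h` under the integral sign, for broken polynomials -/
lemma hasDerivWithinAt_integral (ht : t ∈ S)
    {n : ℕ} {g : ℝ → Polynomial ℝ} {Q : Polynomial ℝ}
    (hdeg : ∀ s ∈ S, (g s).natDegree ≤ n) (hQ : Q.natDegree ≤ n)
    (hd : ∀ y : ℝ, HasDerivWithinAt (fun s => (g s).eval y) (Q.eval y) S t)
    {h : ℝ → ℝ} (hh : Continuous h) (c d : ℝ) :
    HasDerivWithinAt (fun s => ∫ y in c..d, (g s).eval y * h y)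
      (∫ y in c..d, Q.eval y * h y) S t := by
  have key : ∀ R : Polynomial ℝ, R.natDegree ≤ n →
      (∫ y in c..d, R.eval y * h y)
        = ∑ m ∈ Finset.range (n+1), R.eval (m:ℝ) * ∫ y in c..d, (lb n m).eval y * h y := by
    intro R hR
    have h1 : ∀ y : ℝ, R.eval y * h y
        = ∑ m ∈ Finset.range (n+1), R.eval (m:ℝ) * ((lb n m).eval y * h y) := by
      intro y
      rw [rep_eval hR y, Finset.sum_mul]
      simp [mul_assoc]
    rw [intervalIntegral.integral_congr (fun y _ => h1 y),
      intervalIntegral.integral_finset_sum]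
    · simp_rw [intervalIntegral.integral_const_mul]
    · intro m _
      exact (continuous_const.mul ((lb n m).continuous_aeval.mul hh)).intervalIntegrable _ _
  have hF : HasDerivWithinAt
      (fun s => ∑ m ∈ Finset.range (n+1),
        (g s).eval (m:ℝ) * ∫ y in c..d, (lb n m).eval y * h y)
      (∑ m ∈ Finset.range (n+1),
        Q.eval (m:ℝ) * ∫ y in c..d, (lb n m).eval y * h y) S t :=
    HasDerivWithinAt.fun_sum (fun m _ => (hd (m:ℝ)).mul_const _)
  rw [key Q hQ]
  apply hF.congr
  · intro s hs; exact key _ (hdeg s hs)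
  · exact key _ (hdeg t ht)

lemma coeff_hasDerivWithinAt (ht : t ∈ S) {n : ℕ} {g : ℝ → Polynomial ℝ} {Q : Polynomial ℝ}
    (hdeg : ∀ s ∈ S, (g s).natDegree ≤ n)
    (hd : ∀ y : ℝ, HasDerivWithinAt (fun s => (g s).eval y) (Q.eval y) S t) (j : ℕ) :
    HasDerivWithinAt (fun s => (g s).coeff j)
      (∑ m ∈ Finset.range (n+1), Q.eval (m:ℝ) * (lb n m).coeff j) S t := by
  have key : ∀ R : Polynomial ℝ, R.natDegree ≤ n →
      R.coeff j = ∑ m ∈ Finset.range (n+1), R.eval (m:ℝ) * (lb n m).coeff j := by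
    intro R hR
    conv_lhs => rw [rep hR]
    simp [Polynomial.finset_sum_coeff, Polynomial.coeff_C_mul]
  have hF : HasDerivWithinAt
      (fun s => ∑ m ∈ Finset.range (n+1), (g s).eval (m:ℝ) * (lb n m).coeff j)
      (∑ m ∈ Finset.range (n+1), Q.eval (m:ℝ) * (lb n m).coeff j) S t :=
    HasDerivWithinAt.fun_sum (fun m _ => (hd (m:ℝ)).mul_const _)
  exact hF.congr (fun s hs => key _ (hdeg s hs)) (key _ (hdeg t ht))

/-- Differentiating `s ↦ ∫ V((g s).eval y) dy` under the integral sign. -/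
lemma hasDerivWithinAt_integral_comp (ht : t ∈ S)
    {n : ℕ} {g : ℝ → Polynomial ℝ} {Q : Polynomial ℝ}
    (hdeg : ∀ s ∈ S, (g s).natDegree ≤ n)
    (hd : ∀ y : ℝ, HasDerivWithinAt (fun s => (g s).eval y) (Q.eval y) S t)
    {f V : ℝ → ℝ} (hf : Continuous f) (hV : ∀ y, HasDerivAt V (f y) y)
    (c d : ℝ) :
    HasDerivWithinAt (fun s => ∫ y in c..d, V ((g s).eval y))
      (∫ y in c..d, f ((g t).eval y) * Q.eval y) S t := by
  have hVd : Differentiable ℝ V := fun y => (hV y).differentiableAt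
  have hVc : Continuous V := hVd.continuous
  have hgc : ∀ s, Continuous fun y => (g s).eval y := fun s => (g s).continuous
  rw [hasDerivWithinAt_iff_tendsto_slope]
  set L := 𝓝[S \ {t}] t with hL
  -- the slope-coefficients data
  set γ : ℕ → ℝ := fun j => ∑ m ∈ Finset.range (n+1), Q.eval (m:ℝ) * (lb n m).coeff j with hγ
  have hslopecoeff : ∀ j, Tendsto (slope (fun s => (g s).coeff j) t) L (𝓝 (γ j)) := by
    intro j
    exact hasDerivWithinAt_iff_tendsto_slope.mp (coeff_hasDerivWithinAt ht hdeg hd j)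
  set Y : ℝ := |c| + |d| + 1 with hY
  have hY1 : (1:ℝ) ≤ Y := by simp [hY]; positivity
  have hyY : ∀ y ∈ Ι c d, |y| ≤ Y := by
    intro y hy
    rw [Set.mem_uIoc] at hy
    rw [abs_le]
    constructor
    · rcases hy with ⟨h1,_⟩|⟨h1,_⟩ <;> nlinarith [abs_nonneg c, abs_nonneg d, le_abs_self c,
        le_abs_self d, neg_abs_le c, neg_abs_le d]
    · rcases hy with ⟨_,h2⟩|⟨_,h2⟩ <;> nlinarith [abs_nonneg c, abs_nonneg d, le_abs_self c,
        le_abs_self d, neg_abs_le c, neg_abs_le d]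
  set B : ℝ := ∑ j ∈ Finset.range (n+1), (|γ j| + 1) * Y ^ j with hB
  have hB0 : 0 ≤ B := Finset.sum_nonneg (fun j _ => by positivity)
  set A : ℝ := ∑ j ∈ Finset.range (n+1), |(g t).coeff j| * Y ^ j with hA
  have hA0 : 0 ≤ A := Finset.sum_nonneg (fun j _ => by positivity)
  set R : ℝ := A + B with hR
  -- bound on |f| on [-R, R]
  obtain ⟨C0, hC0⟩ := isCompact_Icc.exists_bound_of_continuousOn
    (s := Icc (-R) R) hf.continuousOn
  -- MVT for V
  have hMVT : ∀ a' b' : ℝ, a' ∈ Icc (-R) R → b' ∈ Icc (-R) R → |V b' - V a'| ≤ C0 * |b' - a'| := by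
    intro a' b' ha hb
    have := Convex.norm_image_sub_le_of_norm_hasDerivWithin_le
      (f := V) (f' := f) (s := Icc (-R) R)
      (fun x _ => (hV x).hasDerivWithinAt) (fun x hx => hC0 x hx) (convex_Icc _ _) ha hb
    simpa [Real.norm_eq_abs] using this
  -- eval bound for g t
  have hevalt : ∀ y, |y| ≤ Y → |(g t).eval y| ≤ A := by
    intro y hy
    rw [Polynomial.eval_eq_sum_range' (Nat.lt_succ_of_le (hdeg t ht))]
    refine le_trans (Finset.abs_sum_le_sum_abs _ _) (Finset.sum_le_sum ?_)
    intro j _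
    rw [abs_mul, abs_pow]
    exact mul_le_mul_of_nonneg_left (pow_le_pow_left₀ (abs_nonneg y) hy j) (abs_nonneg _)
  -- eventual slope bound
  have hslopebd : ∀ᶠ s in L, ∀ j ∈ Finset.range (n+1),
      |slope (fun s => (g s).coeff j) t s - γ j| ≤ 1 := by
    rw [eventually_all_finset]
    intro j _
    have := (hslopecoeff j).eventually (Metric.closedBall_mem_nhds (γ j) one_pos)
    refine this.mono (fun s hs => ?_)
    simpa [Real.dist_eq] using hs
  have hmem : ∀ᶠ s in L, s ∈ S \ {t} := self_mem_nhdsWithin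
  have hdist : ∀ᶠ s in L, |s - t| ≤ 1 := by
    have h1 : Metric.closedBall t 1 ∈ 𝓝 t := Metric.closedBall_mem_nhds t one_pos
    have h2 : Metric.closedBall t 1 ∈ L := nhdsWithin_le_nhds h1
    refine eventually_of_mem h2 (fun s hs => ?_)
    simpa [Real.dist_eq] using hs
  -- main difference bound
  have hdiffbd : ∀ s, s ∈ S \ {t} →
      (∀ j ∈ Finset.range (n+1), |slope (fun s => (g s).coeff j) t s - γ j| ≤ 1) →
      ∀ y, |y| ≤ Y → |(g s).eval y - (g t).eval y| ≤ |s - t| * B := by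
    intro s hs hsl y hy
    have hst : s - t ≠ 0 := sub_ne_zero.mpr hs.2
    have hev : (g s).eval y - (g t).eval y
        = ∑ j ∈ Finset.range (n+1), ((g s).coeff j - (g t).coeff j) * y ^ j := by
      rw [Polynomial.eval_eq_sum_range' (Nat.lt_succ_of_le (hdeg s hs.1)),
        Polynomial.eval_eq_sum_range' (Nat.lt_succ_of_le (hdeg t ht)),
        ← Finset.sum_sub_distrib]
      simp [sub_mul]
    rw [hev, Finset.mul_sum]
    refine le_trans (Finset.abs_sum_le_sum_abs _ _) (Finset.sum_le_sum ?_)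
    intro j hj
    have hcoeff : (g s).coeff j - (g t).coeff j = (s - t) * slope (fun s => (g s).coeff j) t s := by
      rw [slope_def_field]
      field_simp
    have hsl' : |slope (fun s => (g s).coeff j) t s| ≤ |γ j| + 1 := by
      have := hsl j hj
      have h2 := abs_sub_abs_le_abs_sub (slope (fun s => (g s).coeff j) t s) (γ j)
      linarith
    rw [abs_mul, abs_pow, hcoeff, abs_mul]
    calc |s - t| * |slope (fun s => (g s).coeff j) t s| * |y| ^ j
        ≤ |s - t| * ((|γ j| + 1) * Y ^ j) := by
          rw [mul_assoc]
          refine mul_le_mul_of_nonneg_left ?_ (abs_nonneg _)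
          exact mul_le_mul hsl' (pow_le_pow_left₀ (abs_nonneg y) hy j) (by positivity) (by positivity)
      _ = |s - t| * ((|γ j| + 1) * Y ^ j) := rfl
  have hR0 : (0:ℝ) ≤ R := by positivity
  have hC0nn : (0:ℝ) ≤ C0 := le_trans (norm_nonneg (f 0)) (hC0 0 ⟨by linarith, by linarith⟩)
  set F : ℝ → ℝ → ℝ := fun s y => slope (fun σ => V ((g σ).eval y)) t s with hFdef
  have hFmeas : ∀ᶠ s in L, MeasureTheory.AEStronglyMeasurable (F s)
      (MeasureTheory.volume.restrict (Ι c d)) := by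
    refine Eventually.of_forall (fun s => Continuous.aestronglyMeasurable ?_)
    have hcont : Continuous fun y => (V ((g s).eval y) - V ((g t).eval y)) / (s - t) :=
      ((hVc.comp (hgc s)).sub (hVc.comp (hgc t))).div_const _
    refine hcont.congr (fun y => ?_)
    simp only [hFdef, slope_def_field]
  have h_bound : ∀ᶠ s in L, ∀ᵐ y ∂MeasureTheory.volume, y ∈ Ι c d → ‖F s y‖ ≤ C0 * B := by
    filter_upwards [hmem, hdist, hslopebd] with s hs hd1 hsl
    refine MeasureTheory.ae_of_all _ (fun y hy => ?_)
    have hyY' := hyY y hy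
    have hst : s - t ≠ 0 := sub_ne_zero.mpr hs.2
    have h1 : |(g s).eval y - (g t).eval y| ≤ |s - t| * B := hdiffbd s hs hsl y hyY'
    have hAt := hevalt y hyY'
    have hut : (g t).eval y ∈ Icc (-R) R := by
      rw [mem_Icc]
      constructor
      · linarith [neg_abs_le ((g t).eval y)]
      · linarith [le_abs_self ((g t).eval y)]
    have hus : (g s).eval y ∈ Icc (-R) R := by
      have h3 : |s - t| * B ≤ 1 * B := mul_le_mul_of_nonneg_right hd1 hB0
      have h4 := abs_sub_abs_le_abs_sub ((g s).eval y) ((g t).eval y)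
      rw [mem_Icc]
      constructor
      · linarith [neg_abs_le ((g s).eval y)]
      · linarith [le_abs_self ((g s).eval y)]
    have hMV := hMVT _ _ hut hus
    simp only [hFdef, Real.norm_eq_abs, slope_def_field]
    rw [abs_div]
    rw [div_le_iff₀ (by positivity : (0:ℝ) < |s - t|)]
    calc |V ((g s).eval y) - V ((g t).eval y)| ≤ C0 * |(g s).eval y - (g t).eval y| := hMV
      _ ≤ C0 * (|s - t| * B) := mul_le_mul_of_nonneg_left h1 hC0nn
      _ = C0 * B * |s - t| := by ring
  have h_lim : ∀ᵐ y ∂MeasureTheory.volume, y ∈ Ι c d →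
      Tendsto (fun s => F s y) L (𝓝 (f ((g t).eval y) * Q.eval y)) := by
    refine MeasureTheory.ae_of_all _ (fun y _ => ?_)
    have hcomp : HasDerivWithinAt (fun s => V ((g s).eval y)) (f ((g t).eval y) * Q.eval y) S t :=
      HasDerivAt.comp_hasDerivWithinAt t (hV ((g t).eval y)) (hd y)
    exact hasDerivWithinAt_iff_tendsto_slope.mp hcomp
  have hDCT := intervalIntegral.tendsto_integral_filter_of_dominated_convergence
      (μ := MeasureTheory.volume) (F := F) (bound := fun _ => C0 * B)
      (f := fun y => f ((g t).eval y) * Q.eval y)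
      hFmeas h_bound intervalIntegrable_const h_lim
  have heq : (fun s => ∫ y in c..d, F s y)
      =ᶠ[L] slope (fun s => ∫ y in c..d, V ((g s).eval y)) t := by
    filter_upwards [hmem] with s hs
    have hst : s - t ≠ 0 := sub_ne_zero.mpr hs.2
    have h1 : ∀ y, F s y = (V ((g s).eval y) - V ((g t).eval y)) / (s - t) := by
      intro y; simp only [hFdef, slope_def_field]
    calc (∫ y in c..d, F s y)
        = ∫ y in c..d, (V ((g s).eval y) - V ((g t).eval y)) / (s - t) :=
          intervalIntegral.integral_congr (fun y _ => h1 y)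
      _ = (∫ y in c..d, (V ((g s).eval y) - V ((g t).eval y))) / (s - t) :=
          intervalIntegral.integral_div _ _
      _ = ((∫ y in c..d, V ((g s).eval y)) - ∫ y in c..d, V ((g t).eval y)) / (s - t) := by
          have hVI : ∀ σ : ℝ, IntervalIntegrable (fun y => V ((g σ).eval y))
              MeasureTheory.volume c d := fun σ => (hVc.comp (hgc σ)).intervalIntegrable c d
          rw [intervalIntegral.integral_sub (hVI s) (hVI t)]
      _ = slope (fun s => ∫ y in c..d, V ((g s).eval y)) t s :=
          (slope_def_field (fun s => ∫ y in c..d, V ((g s).eval y)) t s).symm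
  exact Tendsto.congr' heq hDCT

/-- FTC for a product of polynomials -/
lemma integral_deriv_mul (P Q : Polynomial ℝ) (c d : ℝ) :
    (∫ y in c..d, (P.derivative.eval y * Q.eval y + P.eval y * Q.derivative.eval y))
      = P.eval d * Q.eval d - P.eval c * Q.eval c := by
  refine intervalIntegral.integral_eq_sub_of_hasDerivAt (f := fun y => P.eval y * Q.eval y) (fun y _ => ?_) ?_
  · exact (P.hasDerivAt y).mul (Q.hasDerivAt y)
  · exact ((P.derivative.continuous.mul Q.continuous).add
      (P.continuous.mul Q.derivative.continuous)).intervalIntegrable _ _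

/-- reindexing a sum over `Icc 1 N` with the argument shifted down by one -/
lemma sum_shift {N : ℕ} (hN : 1 ≤ N) (g : ℕ → ℝ) :
    ∑ i ∈ Finset.Icc 1 N, g (i - 1) = g 0 + ∑ i ∈ Finset.Icc 1 (N-1), g i := by
  induction N with
  | zero => omega
  | succ n ih =>
    rcases Nat.eq_or_lt_of_le hN with h1 | h1
    · simp [← h1]
    · have hn : 1 ≤ n := by omega
      rw [Finset.sum_Icc_succ_top (by omega : 1 ≤ n + 1), ih hn]
      have h2 : n + 1 - 1 = n := rfl
      rw [h2]
      have h3 : n - 1 + 1 = n := by omega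
      nth_rewrite 3 [← h3]
      rw [Finset.sum_Icc_succ_top (by omega : 1 ≤ n - 1 + 1), h3]
      ring

lemma sum_top {N : ℕ} (hN : 1 ≤ N) (g : ℕ → ℝ) :
    ∑ i ∈ Finset.Icc 1 N, g i = (∑ i ∈ Finset.Icc 1 (N-1), g i) + g N := by
  have h3 : N - 1 + 1 = N := by omega
  rw [← h3, Finset.sum_Icc_succ_top (by omega : 1 ≤ N - 1 + 1), h3]

end DGAux

namespace DGAux2
open DG DGAux

variable {x : ℕ → ℝ} {N : ℕ}

lemma bt_eq (hN : 1 ≤ N) {φ : ℕ → ℝ} (hφ : φ 0 = φ N) (v : Broken) :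
    bt x N φ v = ∑ i ∈ Finset.Icc 1 N, φ i * jmp x N v i := by
  unfold bt jmp lv rv
  rw [Finset.sum_sub_distrib]
  simp only [mul_sub]
  rw [Finset.sum_sub_distrib]
  congr 1
  have hg : ∀ i ∈ Finset.Icc 1 N, φ (i-1) * (v i).eval (x (i-1))
      = (fun j => φ j * (v (j+1)).eval (x j)) (i-1) := by
    intro i hi
    simp only [Finset.mem_Icc] at hi
    have h1 : i - 1 + 1 = i := by omega
    simp only [h1]
  rw [Finset.sum_congr rfl hg, sum_shift hN (fun j => φ j * (v (j+1)).eval (x j)), sum_top hN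
    (fun i => φ i * (if i = N then (v 1).eval (x 0) else (v (i+1)).eval (x i)))]
  have h2 : ∀ i ∈ Finset.Icc 1 (N-1),
      φ i * (if i = N then (v 1).eval (x 0) else (v (i+1)).eval (x i))
        = φ i * (v (i+1)).eval (x i) := by
    intro i hi
    simp only [Finset.mem_Icc] at hi
    rw [if_neg (by omega)]
  rw [Finset.sum_congr rfl h2, if_pos rfl, ← hφ]
  ring

lemma prod_bd (hN : 1 ≤ N) (P Q : Broken) :
    ∑ i ∈ Finset.Icc 1 N, ((P i).eval (x i) * (Q i).eval (x i)
        - (P i).eval (x (i-1)) * (Q i).eval (x (i-1)))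
      = ∑ i ∈ Finset.Icc 1 N, (jmp x N P i * avg x N Q i + avg x N P i * jmp x N Q i) := by
  have key : ∑ i ∈ Finset.Icc 1 N, ((P i).eval (x i) * (Q i).eval (x i)
        - (P i).eval (x (i-1)) * (Q i).eval (x (i-1)))
      = ∑ i ∈ Finset.Icc 1 N, (lv x P i * lv x Q i - rv x N P i * rv x N Q i) := by
    rw [Finset.sum_sub_distrib, Finset.sum_sub_distrib]
    congr 1
    have hg : ∀ i ∈ Finset.Icc 1 N, (P i).eval (x (i-1)) * (Q i).eval (x (i-1))
        = (fun j => (P (j+1)).eval (x j) * (Q (j+1)).eval (x j)) (i-1) := by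
      intro i hi
      simp only [Finset.mem_Icc] at hi
      have h1 : i - 1 + 1 = i := by omega
      simp only [h1]
    rw [Finset.sum_congr rfl hg, sum_shift hN (fun j => (P (j+1)).eval (x j) * (Q (j+1)).eval (x j)), sum_top hN (fun i => rv x N P i * rv x N Q i)]
    unfold rv
    have h2 : ∀ i ∈ Finset.Icc 1 (N-1),
        (if i = N then (P 1).eval (x 0) else (P (i+1)).eval (x i))
          * (if i = N then (Q 1).eval (x 0) else (Q (i+1)).eval (x i))
        = (P (i+1)).eval (x i) * (Q (i+1)).eval (x i) := by
      intro i hi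
      simp only [Finset.mem_Icc] at hi
      rw [if_neg (by omega), if_neg (by omega)]
    rw [Finset.sum_congr rfl h2, if_pos rfl, if_pos rfl]
    ring
  rw [key]
  refine Finset.sum_congr rfl (fun i _ => ?_)
  unfold jmp avg
  ring

/-- the elementwise FTC identity, in jump/average form -/
lemma sum_int_deriv (hN : 1 ≤ N) (P Q : Broken) :
    (∑ i ∈ Finset.Icc 1 N, ∫ y in (x (i-1))..(x i),
        ((P i).derivative.eval y * (Q i).eval y + (P i).eval y * (Q i).derivative.eval y))
      = ∑ i ∈ Finset.Icc 1 N, (jmp x N P i * avg x N Q i + avg x N P i * jmp x N Q i) := by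
  rw [← prod_bd hN P Q]
  exact Finset.sum_congr rfl (fun i _ => integral_deriv_mul (P i) (Q i) _ _)

lemma ip_comm (F G : ℕ → ℝ → ℝ) : ip x N F G = ip x N G F := by
  unfold ip
  exact Finset.sum_congr rfl (fun i _ => by
    exact intervalIntegral.integral_congr (fun y _ => mul_comm _ _))

end DGAux2

/-- Lemma 2.1(iii): Hamiltonian conservation of the semidiscrete DG scheme with zero
source, assuming the trace `û_h` depends differentiably on `t` (with derivative `uht`;
differentiability of `q_h` is part of the scheme) and the trace condition (2.8). -/
theorem dg_hamiltonian_conservation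
    (a b : ℝ) (N k : ℕ) (x : ℕ → ℝ) (hmesh : DG.Mesh a b N x)
    (T ε : ℝ) (hT : 0 < T) (f V : ℝ → ℝ) (hf : Continuous f)
    (hV : ∀ y : ℝ, HasDerivAt V (f y) y)
    (u q p ut qt pt : ℝ → DG.Broken) (uh qh ph : ℝ → ℕ → ℝ)
    (hS : DG.Scheme x N k T ε f u q p ut qt pt uh qh ph)
    (uht : ℝ → ℕ → ℝ)
    (hduh : ∀ t ∈ Set.Icc (0:ℝ) T, ∀ i,
      HasDerivWithinAt (fun s => uh s i) (uht t i) (Set.Icc (0:ℝ) T) t)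
    (hcond : ∀ t ∈ Set.Icc (0:ℝ) T,
      0 = ∑ i ∈ Finset.Icc 1 N,
        (DG.jmp x N (p t) i * (ph t i - DG.avg x N (p t) i)
          + ε * DG.jmp x N (q t) i * (uht t i - DG.avg x N (ut t) i)
          + ε * DG.jmp x N (ut t) i * (qh t i - DG.avg x N (q t) i))) :
    ∀ t₁ ∈ Set.Icc (0:ℝ) T, ∀ t₂ ∈ Set.Icc (0:ℝ) T,
      (∑ i ∈ Finset.Icc 1 N, ∫ y in (x (i-1))..(x i),
          ((ε/2) * ((q t₁) i).eval y ^ 2 - V (((u t₁) i).eval y)))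
        = ∑ i ∈ Finset.Icc 1 N, ∫ y in (x (i-1))..(x i),
            ((ε/2) * ((q t₂) i).eval y ^ 2 - V (((u t₂) i).eval y)) := by
  have hN : 1 ≤ N := hmesh.hN
  set S : Set ℝ := Set.Icc (0:ℝ) T with hSdef
  have hud : UniqueDiffOn ℝ S := uniqueDiffOn_Icc hT
  have hVd : Differentiable ℝ V := fun y => (hV y).differentiableAt
  have hVc : Continuous V := hVd.continuous
  set H : ℝ → ℝ := fun s => ∑ i ∈ Finset.Icc 1 N, ∫ y in (x (i-1))..(x i),
      ((ε/2) * ((q s) i).eval y ^ 2 - V (((u s) i).eval y)) with hHdef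
  have hderiv : ∀ t ∈ S, HasDerivWithinAt H 0 S t := by
    intro t ht
    have hqt : ∀ i, (qt t i).natDegree ≤ k := fun i =>
      DGAux.derivPoly_natDegree_le (hud t ht) ht (fun s hs => hS.degq s hs i)
        (fun y => hS.dq t ht i y)
    -- derivative of H at t
    have hHd : HasDerivWithinAt H
        (∑ i ∈ Finset.Icc 1 N,
          (ε * (∫ y in (x (i-1))..(x i), (q t i).eval y * (qt t i).eval y)
            - ∫ y in (x (i-1))..(x i), f ((u t i).eval y) * (ut t i).eval y)) S t := by
      rw [hHdef]
      refine HasDerivWithinAt.fun_sum (fun i _ => ?_)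
      have h1 : HasDerivWithinAt
          (fun s => ∫ y in (x (i-1))..(x i), (q s i * q s i).eval y * 1)
          (∫ y in (x (i-1))..(x i), (qt t i * q t i + q t i * qt t i).eval y * 1) S t := by
        refine DGAux.hasDerivWithinAt_integral ht (n := k + k) ?_ ?_ ?_ continuous_const _ _
        · intro s hs
          exact (Polynomial.natDegree_mul_le).trans (add_le_add (hS.degq s hs i) (hS.degq s hs i))
        · exact (Polynomial.natDegree_add_le _ _).trans (max_le
            ((Polynomial.natDegree_mul_le).trans (add_le_add (hqt i) (hS.degq t ht i)))
            ((Polynomial.natDegree_mul_le).trans (add_le_add (hS.degq t ht i) (hqt i))))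
        · intro y
          simp only [Polynomial.eval_mul, Polynomial.eval_add]
          exact (hS.dq t ht i y).mul (hS.dq t ht i y)
      have h2 : HasDerivWithinAt
          (fun s => ∫ y in (x (i-1))..(x i), V ((u s i).eval y))
          (∫ y in (x (i-1))..(x i), f ((u t i).eval y) * (ut t i).eval y) S t :=
        DGAux.hasDerivWithinAt_integral_comp ht (fun s hs => hS.degu s hs i)
          (fun y => hS.du t ht i y) hf hV _ _
      have h3 := (h1.const_mul (ε/2)).sub h2
      have hlhs : ∀ s : ℝ, (ε/2) * (∫ y in (x (i-1))..(x i), (q s i * q s i).eval y * 1)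
          - (∫ y in (x (i-1))..(x i), V ((u s i).eval y))
          = ∫ y in (x (i-1))..(x i), ((ε/2) * (q s i).eval y ^ 2 - V ((u s i).eval y)) := by
        intro s
        have hInt1 : IntervalIntegrable (fun y => ε/2 * ((q s i * q s i).eval y * 1))
            MeasureTheory.volume (x (i-1)) (x i) :=
          (continuous_const.mul ((q s i * q s i).continuous.mul continuous_const)
            ).intervalIntegrable _ _
        have hInt2 : IntervalIntegrable (fun y => V ((u s i).eval y))
            MeasureTheory.volume (x (i-1)) (x i) :=
          (hVc.comp (u s i).continuous).intervalIntegrable _ _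
        rw [← intervalIntegral.integral_const_mul, ← intervalIntegral.integral_sub hInt1 hInt2]
        exact intervalIntegral.integral_congr (fun y _ => by
          simp only [Polynomial.eval_mul]; ring_nf)
      have hval : (ε/2) * (∫ y in (x (i-1))..(x i), (qt t i * q t i + q t i * qt t i).eval y * 1)
          = ε * ∫ y in (x (i-1))..(x i), (q t i).eval y * (qt t i).eval y := by
        rw [← intervalIntegral.integral_const_mul, ← intervalIntegral.integral_const_mul]
        exact intervalIntegral.integral_congr (fun y _ => by
          simp only [Polynomial.eval_mul, Polynomial.eval_add]; ring)
      rw [← hval]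
      exact h3.congr (fun s _ => (hlhs s).symm) ((hlhs t).symm)
    -- the differentiated first scheme equation
    have E1' : ∀ v : DG.Broken, DG.DegLE k v →
        DG.ip x N (DG.ev (qt t)) (DG.ev v) + DG.ip x N (DG.ev (ut t)) (DG.ev (DG.dx v))
          - DG.bt x N (uht t) v = 0 := by
      intro v hv
      have hip1 : HasDerivWithinAt (fun s => DG.ip x N (DG.ev (q s)) (DG.ev v))
          (DG.ip x N (DG.ev (qt t)) (DG.ev v)) S t := by
        show HasDerivWithinAt (fun s => ∑ i ∈ Finset.Icc 1 N,
          ∫ y in (x (i-1))..(x i), (q s i).eval y * (v i).eval y)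
          (∑ i ∈ Finset.Icc 1 N, ∫ y in (x (i-1))..(x i), (qt t i).eval y * (v i).eval y) S t
        refine HasDerivWithinAt.fun_sum (fun i _ => ?_)
        exact DGAux.hasDerivWithinAt_integral ht (fun s hs => hS.degq s hs i) (hqt i)
          (fun y => hS.dq t ht i y) (v i).continuous _ _
      have hip2 : HasDerivWithinAt (fun s => DG.ip x N (DG.ev (u s)) (DG.ev (DG.dx v)))
          (DG.ip x N (DG.ev (ut t)) (DG.ev (DG.dx v))) S t := by
        show HasDerivWithinAt (fun s => ∑ i ∈ Finset.Icc 1 N,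
          ∫ y in (x (i-1))..(x i), (u s i).eval y * ((v i).derivative).eval y)
          (∑ i ∈ Finset.Icc 1 N,
            ∫ y in (x (i-1))..(x i), (ut t i).eval y * ((v i).derivative).eval y) S t
        refine HasDerivWithinAt.fun_sum (fun i _ => ?_)
        exact DGAux.hasDerivWithinAt_integral ht (fun s hs => hS.degu s hs i)
          (hS.degut t ht i) (fun y => hS.du t ht i y) (v i).derivative.continuous _ _
      have hbt : HasDerivWithinAt (fun s => DG.bt x N (uh s) v) (DG.bt x N (uht t) v) S t := by
        show HasDerivWithinAt (fun s => ∑ i ∈ Finset.Icc 1 N,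
          (uh s i * (v i).eval (x i) - uh s (i-1) * (v i).eval (x (i-1))))
          (∑ i ∈ Finset.Icc 1 N,
            (uht t i * (v i).eval (x i) - uht t (i-1) * (v i).eval (x (i-1)))) S t
        refine HasDerivWithinAt.fun_sum (fun i _ => ?_)
        exact ((hduh t ht i).mul_const _).sub ((hduh t ht (i-1)).mul_const _)
      have hD := (hip1.add hip2).sub hbt
      have h0' : HasDerivWithinAt (fun s => DG.ip x N (DG.ev (q s)) (DG.ev v)
          + DG.ip x N (DG.ev (u s)) (DG.ev (DG.dx v)) - DG.bt x N (uh s) v) 0 S t :=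
        (hasDerivWithinAt_const t S 0).congr (fun s hs => hS.eq1 s hs v hv) (hS.eq1 t ht v hv)
      exact (hud t ht).eq_deriv S hD h0'
    -- the three variational identities at time t
    have E1 := E1' (q t) (hS.degq t ht)
    have E2 := hS.eq2 t ht (ut t) (hS.degut t ht)
    have E3 := hS.eq3 t ht (p t) (hS.degp t ht)
    -- uht is a numerical trace
    have htr : uht t 0 = uht t N := by
      have h1 : HasDerivWithinAt (fun s => uh s 0) (uht t 0) S t := hduh t ht 0
      have h2 : HasDerivWithinAt (fun s => uh s 0) (uht t N) S t :=
        (hduh t ht N).congr (fun s hs => hS.trace_u s hs) (hS.trace_u t ht)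
      exact (hud t ht).eq_deriv S h1 h2
    -- boundary-term identities
    have hA3 : DG.bt x N (uht t) (q t)
        = ∑ i ∈ Finset.Icc 1 N, uht t i * DG.jmp x N (q t) i := DGAux2.bt_eq hN htr (q t)
    have hB3 : DG.bt x N (qh t) (ut t)
        = ∑ i ∈ Finset.Icc 1 N, qh t i * DG.jmp x N (ut t) i :=
      DGAux2.bt_eq hN (hS.trace_q t ht) (ut t)
    have hC3 : DG.bt x N (ph t) (p t)
        = ∑ i ∈ Finset.Icc 1 N, ph t i * DG.jmp x N (p t) i :=
      DGAux2.bt_eq hN (hS.trace_p t ht) (p t)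
    -- integration-by-parts identities
    have hS1 : DG.ip x N (DG.ev (ut t)) (DG.ev (DG.dx (q t)))
        + DG.ip x N (DG.ev (q t)) (DG.ev (DG.dx (ut t)))
        = ∑ i ∈ Finset.Icc 1 N, (DG.jmp x N (q t) i * DG.avg x N (ut t) i
            + DG.avg x N (q t) i * DG.jmp x N (ut t) i) := by
      rw [← DGAux2.sum_int_deriv hN (q t) (ut t)]
      show (∑ i ∈ Finset.Icc 1 N,
          ∫ y in (x (i-1))..(x i), (ut t i).eval y * ((q t i).derivative).eval y)
        + (∑ i ∈ Finset.Icc 1 N,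
          ∫ y in (x (i-1))..(x i), (q t i).eval y * ((ut t i).derivative).eval y) = _
      rw [← Finset.sum_add_distrib]
      refine Finset.sum_congr rfl (fun i _ => ?_)
      rw [← intervalIntegral.integral_add
        (((ut t i).continuous.fun_mul (q t i).derivative.continuous).intervalIntegrable _ _)
        (((q t i).continuous.fun_mul (ut t i).derivative.continuous).intervalIntegrable _ _)]
      exact intervalIntegral.integral_congr (fun y _ => by ring)
    have hS2 : DG.ip x N (DG.ev (p t)) (DG.ev (DG.dx (p t)))
        + DG.ip x N (DG.ev (p t)) (DG.ev (DG.dx (p t)))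
        = ∑ i ∈ Finset.Icc 1 N, (DG.jmp x N (p t) i * DG.avg x N (p t) i
            + DG.avg x N (p t) i * DG.jmp x N (p t) i) := by
      rw [← DGAux2.sum_int_deriv hN (p t) (p t)]
      show (∑ i ∈ Finset.Icc 1 N,
          ∫ y in (x (i-1))..(x i), (p t i).eval y * ((p t i).derivative).eval y)
        + (∑ i ∈ Finset.Icc 1 N,
          ∫ y in (x (i-1))..(x i), (p t i).eval y * ((p t i).derivative).eval y) = _
      rw [← Finset.sum_add_distrib]
      refine Finset.sum_congr rfl (fun i _ => ?_)
      rw [← intervalIntegral.integral_add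
        (((p t i).continuous.fun_mul (p t i).derivative.continuous).intervalIntegrable _ _)
        (((p t i).continuous.fun_mul (p t i).derivative.continuous).intervalIntegrable _ _)]
      exact intervalIntegral.integral_congr (fun y _ => by ring)
    have hcomm1 : DG.ip x N (DG.ev (qt t)) (DG.ev (q t))
        = DG.ip x N (DG.ev (q t)) (DG.ev (qt t)) := DGAux2.ip_comm _ _
    have hcomm2 : DG.ip x N (DG.ev (ut t)) (DG.ev (p t))
        = DG.ip x N (DG.ev (p t)) (DG.ev (ut t)) := DGAux2.ip_comm _ _
    have hkey : (∑ i ∈ Finset.Icc 1 N,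
        (DG.jmp x N (p t) i * (ph t i - DG.avg x N (p t) i)
          + ε * DG.jmp x N (q t) i * (uht t i - DG.avg x N (ut t) i)
          + ε * DG.jmp x N (ut t) i * (qh t i - DG.avg x N (q t) i)))
        = ε * (∑ i ∈ Finset.Icc 1 N, uht t i * DG.jmp x N (q t) i)
          + ε * (∑ i ∈ Finset.Icc 1 N, qh t i * DG.jmp x N (ut t) i)
          + (∑ i ∈ Finset.Icc 1 N, ph t i * DG.jmp x N (p t) i)
          - ε * (∑ i ∈ Finset.Icc 1 N, (DG.jmp x N (q t) i * DG.avg x N (ut t) i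
              + DG.avg x N (q t) i * DG.jmp x N (ut t) i))
          - (∑ i ∈ Finset.Icc 1 N, (DG.jmp x N (p t) i * DG.avg x N (p t) i
              + DG.avg x N (p t) i * DG.jmp x N (p t) i)) / 2 := by
      rw [Finset.mul_sum, Finset.mul_sum, Finset.mul_sum, Finset.sum_div,
        ← Finset.sum_add_distrib, ← Finset.sum_add_distrib, ← Finset.sum_sub_distrib,
        ← Finset.sum_sub_distrib]
      exact Finset.sum_congr rfl (fun i _ => by ring)
    have h0 := hcond t ht
    -- the derivative of H vanishes
    have hzero : (∑ i ∈ Finset.Icc 1 N,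
        (ε * (∫ y in (x (i-1))..(x i), (q t i).eval y * (qt t i).eval y)
          - ∫ y in (x (i-1))..(x i), f ((u t i).eval y) * (ut t i).eval y)) = 0 := by
      have hipq : (∑ i ∈ Finset.Icc 1 N,
          ∫ y in (x (i-1))..(x i), (q t i).eval y * (qt t i).eval y)
          = DG.ip x N (DG.ev (q t)) (DG.ev (qt t)) := rfl
      have hipf : (∑ i ∈ Finset.Icc 1 N,
          ∫ y in (x (i-1))..(x i), f ((u t i).eval y) * (ut t i).eval y)
          = DG.ip x N (fun i y => f ((u t i).eval y)) (DG.ev (ut t)) := rfl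
      rw [Finset.sum_sub_distrib, ← Finset.mul_sum, hipq, hipf]
      linear_combination (ε : ℝ) * E1 - ε * hcomm1 + E2 + hcomm2 - E3 - ε * hS1
        + ε * hA3 + ε * hB3 + hC3 - hS2 / 2 - hkey - h0
    exact hzero ▸ hHd
  -- conclude: H is constant on [0, T]
  have hconst : ∀ s ∈ S, H s = H 0 := by
    refine constant_of_derivWithin_zero (fun s hs => (hderiv s hs).differentiableWithinAt) ?_
    intro s hs
    exact (hderiv s (Set.Ico_subset_Icc_self hs)).derivWithin
      (hud s (Set.Ico_subset_Icc_self hs))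
  intro t₁ ht₁ t₂ ht₂
  show H t₁ = H t₂
  rw [hconst t₁ ht₁, hconst t₂ ht₂]
end
end

section
/- Theorem 2.1 (full conservation for the new DG method): Suppose (u_h, q_h, p_h) satisfy the semidiscrete DG scheme with zero source, with numerical traces given by û_h = {u_h}, q̂_h = {q_h} + τ_qu ⟦u_h⟧, p̂_h = {p_h} + τ_pu ⟦u_h⟧ at every node, where τ_qu, τ_pu : [0,T] → ℝ are (node-independent) parameters satisfying, at every t: (a) τ_pu Σ_{i=1}^N ⟦u_h⟧²(x_i) − ε τ_qu Σ_{i=1}^N ⟦u_h⟧⟦q_h⟧(x_i) = Σ_{i=1}^N ( ⟦V(u_h)⟧ − {Π f(u_h)} ⟦u_h⟧ )(x_i), and (b) τ_pu Σ_{i=1}^N ⟦p_h⟧⟦u_h⟧(x_i) + ε τ_qu Σ_{i=1}^N ⟦∂_t u_h⟧⟦u_h⟧(x_i) = 0. Then all three discrete invariants are conserved on [0,T]: t ↦ Σ_{i=1}^N ∫_{I_i} u_h dx (mass), t ↦ Σ_{i=1}^N ∫_{I_i} u_h² dx (energy), and t ↦ Σ_{i=1}^N ∫_{I_i} ( (ε/2)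 q_h² − V(u_h) ) dx (Hamiltonian) are all constant. -/
open Polynomial Set

noncomputable section

namespace DGAux
open DG

theorem shift_sum {N : ℕ} (h : ℕ → ℝ) (h0 : h 0 = h N) :
    ∑ i ∈ Finset.Icc 1 N, h (i-1) = ∑ i ∈ Finset.Icc 1 N, h i := by
  have e : ∀ g : ℕ → ℝ, ∑ i ∈ Finset.Icc 1 N, g i = ∑ j ∈ Finset.range N, g (1+j) := by
    intro g
    rw [← Finset.Ico_add_one_right_eq_Icc, Finset.sum_Ico_eq_sum_range]
    simp
  rw [e, e]
  have h1 : ∀ j, h (1 + j - 1) = h j := by intro j; congr 1; omega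
  simp_rw [h1]
  have tele := Finset.sum_range_sub h N
  have h2 : ∑ j ∈ Finset.range N, h (1+j)
      = ∑ j ∈ Finset.range N, (h (j+1) - h j) + ∑ j ∈ Finset.range N, h j := by
    rw [← Finset.sum_add_distrib]
    refine Finset.sum_congr rfl fun j _ => ?_
    rw [add_comm 1 j]; ring
  rw [h2, tele, h0]; ring

variable {x : ℕ → ℝ} {N : ℕ}

theorem rv_shift (hN : 1 ≤ N) (v : Broken) {i : ℕ} (hi : i ∈ Finset.Icc 1 N) :
    (v i).eval (x (i-1)) = rv x N v (i-1) := by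
  rw [Finset.mem_Icc] at hi
  rw [rv, if_neg (by omega)]
  congr 2
  omega

theorem rv_zero (hN : 1 ≤ N) (v : Broken) : rv x N v 0 = rv x N v N := by
  rw [rv, rv, if_neg (by omega), if_pos rfl]

/-- boundary sum with periodic reindexing, composed with arbitrary `g` applied to right values -/
theorem sum_boundary (hN : 1 ≤ N) (g : ℝ → ℝ) (P : Broken) :
    ∑ i ∈ Finset.Icc 1 N, (g ((P i).eval (x i)) - g ((P i).eval (x (i-1))))
      = ∑ i ∈ Finset.Icc 1 N, (g (lv x P i) - g (rv x N P i)) := by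
  rw [Finset.sum_sub_distrib, Finset.sum_sub_distrib]
  congr 1
  have e : ∀ i ∈ Finset.Icc 1 N, g ((P i).eval (x (i-1))) = (fun j => g (rv x N P j)) (i-1) := by
    intro i hi; simp only []; rw [rv_shift hN P hi]
  rw [Finset.sum_congr rfl e, shift_sum (fun j => g (rv x N P j)) (by beta_reduce; rw [rv_zero hN])]

theorem bt_eq (hN : 1 ≤ N) (φ : ℕ → ℝ) (hφ : φ 0 = φ N) (v : Broken) :
    bt x N φ v = ∑ i ∈ Finset.Icc 1 N, φ i * jmp x N v i := by
  unfold bt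
  rw [Finset.sum_sub_distrib]
  have e : ∀ i ∈ Finset.Icc 1 N, φ (i-1) * (v i).eval (x (i-1))
      = (fun j => φ j * rv x N v j) (i-1) := by
    intro i hi; simp only []; rw [rv_shift hN v hi]
  rw [Finset.sum_congr rfl e, shift_sum (fun j => φ j * rv x N v j) (by beta_reduce; rw [rv_zero hN, hφ])]
  rw [← Finset.sum_sub_distrib]
  refine Finset.sum_congr rfl fun i _ => ?_
  rw [jmp, lv]; ring

theorem jmp_mul (P Q : Broken) (i : ℕ) :
    jmp x N (fun j => P j * Q j) i = avg x N P i * jmp x N Q i + jmp x N P i * avg x N Q i := by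
  unfold jmp avg lv rv
  by_cases h : i = N <;> simp [h] <;> ring

theorem ip_symm (F G : ℕ → ℝ → ℝ) : ip x N F G = ip x N G F := by
  unfold ip
  refine Finset.sum_congr rfl fun i _ => intervalIntegral.integral_congr fun y _ => mul_comm _ _

theorem ip_dx_add (hN : 1 ≤ N) (P Q : Broken) :
    ip x N (ev P) (ev (dx Q)) + ip x N (ev (dx P)) (ev Q)
      = ∑ i ∈ Finset.Icc 1 N,
          (avg x N P i * jmp x N Q i + jmp x N P i * avg x N Q i) := by
  unfold ip
  rw [← Finset.sum_add_distrib]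
  have key : ∀ i ∈ Finset.Icc 1 N,
      ((∫ y in (x (i-1))..(x i), ev P i y * ev (dx Q) i y)
        + ∫ y in (x (i-1))..(x i), ev (dx P) i y * ev Q i y)
      = ((P i * Q i).eval (x i) - (P i * Q i).eval (x (i-1))) := by
    intro i _
    have int1 : IntervalIntegrable (fun y => ev P i y * ev (dx Q) i y) MeasureTheory.volume (x (i-1)) (x i) :=
      (((P i).continuous_aeval).mul ((Q i).derivative.continuous_aeval)).intervalIntegrable _ _
    have int2 : IntervalIntegrable (fun y => ev (dx P) i y * ev Q i y) MeasureTheory.volume (x (i-1)) (x i) :=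
      (((P i).derivative.continuous_aeval).mul ((Q i).continuous_aeval)).intervalIntegrable _ _
    rw [← intervalIntegral.integral_add int1 int2]
    have hd : ∀ y ∈ Set.uIcc (x (i-1)) (x i),
        HasDerivAt (fun y => (P i * Q i).eval y)
          (ev P i y * ev (dx Q) i y + ev (dx P) i y * ev Q i y) y := by
      intro y _
      have := ((P i).hasDerivAt y).mul ((Q i).hasDerivAt y)
      simp only [eval_mul]
      exact this.congr_deriv (by unfold ev dx; ring)
    have hint : IntervalIntegrable (fun y => ev P i y * ev (dx Q) i y + ev (dx P) i y * ev Q i y)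
        MeasureTheory.volume (x (i-1)) (x i) := int1.add int2
    exact intervalIntegral.integral_eq_sub_of_hasDerivAt hd hint
  have sb := sum_boundary (x := x) hN id (fun j => P j * Q j)
  simp only [id_eq] at sb
  rw [Finset.sum_congr rfl key, sb]
  refine Finset.sum_congr rfl fun i _ => ?_
  exact jmp_mul (x := x) (N := N) P Q i

theorem ftcV (hN : 1 ≤ N) {f V : ℝ → ℝ} (hf : Continuous f)
    (hV : ∀ y : ℝ, HasDerivAt V (f y) y) (P : Broken) :
    ip x N (fun i y => f ((P i).eval y)) (ev (dx P))
      = ∑ i ∈ Finset.Icc 1 N, jmpC x N V P i := by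
  unfold ip
  have key : ∀ i ∈ Finset.Icc 1 N,
      (∫ y in (x (i-1))..(x i), f ((P i).eval y) * ev (dx P) i y)
        = V ((P i).eval (x i)) - V ((P i).eval (x (i-1))) := by
    intro i _
    have hd : ∀ y ∈ Set.uIcc (x (i-1)) (x i),
        HasDerivAt (fun y => V ((P i).eval y)) (f ((P i).eval y) * ev (dx P) i y) y := by
      intro y _
      exact (hV ((P i).eval y)).comp y ((P i).hasDerivAt y)
    have hint : IntervalIntegrable (fun y => f ((P i).eval y) * ev (dx P) i y)
        MeasureTheory.volume (x (i-1)) (x i) :=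
      ((hf.comp (P i).continuous_aeval).mul ((P i).derivative.continuous_aeval)).intervalIntegrable _ _
    exact intervalIntegral.integral_eq_sub_of_hasDerivAt hd hint
  rw [Finset.sum_congr rfl key, sum_boundary hN V P]
  rfl

end DGAux

namespace DGAux
open DG Polynomial

/-- Lagrange basis on nodes 0,1,…,k -/
def Lb (k m : ℕ) : Polynomial ℝ := Lagrange.basis (Finset.range (k+1)) (fun n : ℕ => (n:ℝ)) m

theorem lag_expand {k : ℕ} {p : Polynomial ℝ} (hp : p.natDegree ≤ k) (y : ℝ) :
    p.eval y = ∑ m ∈ Finset.range (k+1), p.eval (m:ℝ) * (Lb k m).eval y := by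
  have hinj : Set.InjOn (fun n : ℕ => (n:ℝ)) (Finset.range (k+1)) :=
    fun a _ b _ h => Nat.cast_injective h
  have hdeg : p.degree < ((Finset.range (k+1)).card : ℕ) := by
    rw [Finset.card_range]
    exact lt_of_le_of_lt Polynomial.degree_le_natDegree (by exact_mod_cast Nat.lt_succ_of_le hp)
  conv_lhs => rw [Lagrange.eq_interpolate hinj hdeg]
  rw [Lagrange.interpolate_apply]
  rw [Polynomial.eval_finset_sum]
  refine Finset.sum_congr rfl fun m _ => ?_
  rw [Polynomial.eval_mul, Polynomial.eval_C]
  rfl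


end DGAux



namespace DGAux
open DG Polynomial

/-- reference integrals of products of Lagrange basis polynomials -/
def KK (x : ℕ → ℝ) (k : ℕ) (i m m' : ℕ) : ℝ :=
  ∫ y in (x (i-1))..(x i), (Lb k m).eval y * (Lb k m').eval y

theorem ip_expand {x : ℕ → ℝ} {N k : ℕ} (P Q : Broken) (hP : DegLE k P) (hQ : DegLE k Q) :
    ip x N (ev P) (ev Q) = ∑ i ∈ Finset.Icc 1 N, ∑ m ∈ Finset.range (k+1),
      ∑ m' ∈ Finset.range (k+1), (P i).eval (m:ℝ) * (Q i).eval (m':ℝ) * KK x k i m m' := by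
  unfold ip
  refine Finset.sum_congr rfl fun i _ => ?_
  have hpt : ∀ y : ℝ, ev P i y * ev Q i y
      = ∑ m ∈ Finset.range (k+1), ∑ m' ∈ Finset.range (k+1),
          (P i).eval (m:ℝ) * (Q i).eval (m':ℝ) * ((Lb k m).eval y * (Lb k m').eval y) := by
    intro y
    show (P i).eval y * (Q i).eval y = _
    rw [lag_expand (hP i) y, lag_expand (hQ i) y, Finset.sum_mul_sum]
    refine Finset.sum_congr rfl fun m _ => Finset.sum_congr rfl fun m' _ => by ring
  rw [intervalIntegral.integral_congr (fun y _ => hpt y)]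
  rw [intervalIntegral.integral_finset_sum (fun m _ => ?_)]
  · refine Finset.sum_congr rfl fun m _ => ?_
    rw [intervalIntegral.integral_finset_sum (fun m' _ => ?_)]
    · refine Finset.sum_congr rfl fun m' _ => ?_
      rw [intervalIntegral.integral_const_mul]
      rfl
    · exact (continuous_const.mul (((Lb k m).continuous_aeval).mul
        ((Lb k m').continuous_aeval))).intervalIntegrable _ _
  · apply Continuous.intervalIntegrable
    exact continuous_finset_sum _ fun m' _ => continuous_const.mul
      (((Lb k m).continuous_aeval).mul ((Lb k m').continuous_aeval))

variable {x : ℕ → ℝ} {N k : ℕ} {T : ℝ}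

/-- time derivative of an inner product of two evolving broken polynomials -/
theorem hasDeriv_ip {P Pt Q Qt : ℝ → Broken} {t : ℝ}
    (hPdeg : ∀ s ∈ Set.Icc (0:ℝ) T, DegLE k (P s))
    (hQdeg : ∀ s ∈ Set.Icc (0:ℝ) T, DegLE k (Q s))
    (ht : t ∈ Set.Icc (0:ℝ) T)
    (hPt : DegLE k (Pt t)) (hQt : DegLE k (Qt t))
    (hdP : ∀ i (y : ℝ), HasDerivWithinAt (fun s => ((P s) i).eval y) (((Pt t) i).eval y)
      (Set.Icc (0:ℝ) T) t)
    (hdQ : ∀ i (y : ℝ), HasDerivWithinAt (fun s => ((Q s) i).eval y) (((Qt t) i).eval y)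
      (Set.Icc (0:ℝ) T) t) :
    HasDerivWithinAt (fun s => ip x N (ev (P s)) (ev (Q s)))
      (ip x N (ev (Pt t)) (ev (Q t)) + ip x N (ev (P t)) (ev (Qt t)))
      (Set.Icc (0:ℝ) T) t := by
  have key : HasDerivWithinAt
      (fun s => ∑ i ∈ Finset.Icc 1 N, ∑ m ∈ Finset.range (k+1), ∑ m' ∈ Finset.range (k+1),
        ((P s) i).eval (m:ℝ) * ((Q s) i).eval (m':ℝ) * KK x k i m m')
      (∑ i ∈ Finset.Icc 1 N, ∑ m ∈ Finset.range (k+1), ∑ m' ∈ Finset.range (k+1),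
        (((Pt t) i).eval (m:ℝ) * ((Q t) i).eval (m':ℝ)
          + ((P t) i).eval (m:ℝ) * ((Qt t) i).eval (m':ℝ)) * KK x k i m m')
      (Set.Icc (0:ℝ) T) t := by
    refine HasDerivWithinAt.fun_sum fun i _ => HasDerivWithinAt.fun_sum fun m _ =>
      HasDerivWithinAt.fun_sum fun m' _ => ?_
    exact ((hdP i (m:ℝ)).mul (hdQ i (m':ℝ))).mul_const _
  have e1 : ∀ s ∈ Set.Icc (0:ℝ) T, ip x N (ev (P s)) (ev (Q s))
      = ∑ i ∈ Finset.Icc 1 N, ∑ m ∈ Finset.range (k+1), ∑ m' ∈ Finset.range (k+1),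
        ((P s) i).eval (m:ℝ) * ((Q s) i).eval (m':ℝ) * KK x k i m m' :=
    fun s hs => ip_expand _ _ (hPdeg s hs) (hQdeg s hs)
  have e2 : (∑ i ∈ Finset.Icc 1 N, ∑ m ∈ Finset.range (k+1), ∑ m' ∈ Finset.range (k+1),
        (((Pt t) i).eval (m:ℝ) * ((Q t) i).eval (m':ℝ)
          + ((P t) i).eval (m:ℝ) * ((Qt t) i).eval (m':ℝ)) * KK x k i m m')
      = ip x N (ev (Pt t)) (ev (Q t)) + ip x N (ev (P t)) (ev (Qt t)) := by
    rw [ip_expand (N := N) (Pt t) (Q t) hPt (hQdeg t ht),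
      ip_expand (N := N) (P t) (Qt t) (hPdeg t ht) hQt, ← Finset.sum_add_distrib]
    refine Finset.sum_congr rfl fun i _ => ?_
    rw [← Finset.sum_add_distrib]
    refine Finset.sum_congr rfl fun m _ => ?_
    rw [← Finset.sum_add_distrib]
    exact Finset.sum_congr rfl fun m' _ => by ring
  rw [← e2]
  exact key.congr e1 (e1 t ht)

end DGAux



namespace DGAux
open DG Polynomial

variable {x : ℕ → ℝ} {N k : ℕ} {T : ℝ}

theorem hasDeriv_lv {P Pt : ℝ → Broken} {t : ℝ} (i : ℕ)
    (hdP : ∀ i (y : ℝ), HasDerivWithinAt (fun s => ((P s) i).eval y) (((Pt t) i).eval y)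
      (Set.Icc (0:ℝ) T) t) :
    HasDerivWithinAt (fun s => lv x (P s) i) (lv x (Pt t) i) (Set.Icc (0:ℝ) T) t :=
  hdP i (x i)

theorem hasDeriv_rv {P Pt : ℝ → Broken} {t : ℝ} (i : ℕ)
    (hdP : ∀ i (y : ℝ), HasDerivWithinAt (fun s => ((P s) i).eval y) (((Pt t) i).eval y)
      (Set.Icc (0:ℝ) T) t) :
    HasDerivWithinAt (fun s => rv x N (P s) i) (rv x N (Pt t) i) (Set.Icc (0:ℝ) T) t := by
  by_cases h : i = N
  · simp only [rv, if_pos h]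
    exact hdP 1 (x 0)
  · simp only [rv, if_neg h]
    exact hdP (i+1) (x i)

theorem hasDeriv_jmp {P Pt : ℝ → Broken} {t : ℝ} (i : ℕ)
    (hdP : ∀ i (y : ℝ), HasDerivWithinAt (fun s => ((P s) i).eval y) (((Pt t) i).eval y)
      (Set.Icc (0:ℝ) T) t) :
    HasDerivWithinAt (fun s => jmp x N (P s) i) (jmp x N (Pt t) i) (Set.Icc (0:ℝ) T) t :=
  (hasDeriv_lv i hdP).sub (hasDeriv_rv i hdP)

theorem hasDeriv_avg {P Pt : ℝ → Broken} {t : ℝ} (i : ℕ)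
    (hdP : ∀ i (y : ℝ), HasDerivWithinAt (fun s => ((P s) i).eval y) (((Pt t) i).eval y)
      (Set.Icc (0:ℝ) T) t) :
    HasDerivWithinAt (fun s => avg x N (P s) i) (avg x N (Pt t) i) (Set.Icc (0:ℝ) T) t :=
  ((hasDeriv_lv i hdP).add (hasDeriv_rv i hdP)).div_const 2

theorem deriv_of_zero (hT : 0 < T) {Φ : ℝ → ℝ} {D : ℝ} {t : ℝ} (ht : t ∈ Set.Icc (0:ℝ) T)
    (hΦ : ∀ s ∈ Set.Icc (0:ℝ) T, Φ s = 0)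
    (hD : HasDerivWithinAt Φ D (Set.Icc (0:ℝ) T) t) : D = 0 := by
  have h0 : HasDerivWithinAt (fun _ : ℝ => (0:ℝ)) D (Set.Icc (0:ℝ) T) t :=
    hD.congr (fun s hs => (hΦ s hs).symm) (hΦ t ht).symm
  have hu : UniqueDiffWithinAt ℝ (Set.Icc (0:ℝ) T) t := (uniqueDiffOn_Icc hT) t ht
  exact (hu.eq_deriv _ h0 (hasDerivWithinAt_const t _ 0))

theorem const_of_deriv_zero (hT : 0 < T) {F : ℝ → ℝ}
    (hF : ∀ t ∈ Set.Icc (0:ℝ) T, HasDerivWithinAt F 0 (Set.Icc (0:ℝ) T) t) :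
    ∀ t₁ ∈ Set.Icc (0:ℝ) T, ∀ t₂ ∈ Set.Icc (0:ℝ) T, F t₁ = F t₂ := by
  have hcont : ContinuousOn F (Set.Icc (0:ℝ) T) := fun t ht => (hF t ht).continuousWithinAt
  have key : ∀ t ∈ Set.Icc (0:ℝ) T, F t = F 0 := by
    apply constant_of_has_deriv_right_zero hcont
    intro t ht
    have h1 : Set.Icc (0:ℝ) T ∈ nhdsWithin t (Set.Ici t) := Icc_mem_nhdsGE_of_mem ht
    exact (hF t (Set.Ico_subset_Icc_self ht)).mono_of_mem_nhdsWithin h1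
  intro t₁ h₁ t₂ h₂
  rw [key t₁ h₁, key t₂ h₂]

end DGAux



namespace DGAux
open DG Polynomial

/-- evaluation of a degree-≤k polynomial from its values at the nodes 0,…,k,
as a continuous linear map on the vector of nodal values -/
def Emap (k : ℕ) (y : ℝ) : (Fin (k+1) → ℝ) →L[ℝ] ℝ :=
  ∑ m : Fin (k+1), (Lb k m).eval y • ContinuousLinearMap.proj m

theorem Emap_apply (k : ℕ) (y : ℝ) (c : Fin (k+1) → ℝ) :
    Emap k y c = ∑ m : Fin (k+1), (Lb k (m:ℕ)).eval y * c m := by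
  simp [Emap, ContinuousLinearMap.sum_apply, ContinuousLinearMap.smul_apply,
    ContinuousLinearMap.proj_apply, smul_eq_mul]

theorem eval_eq_Emap {k : ℕ} {p : Polynomial ℝ} (hp : p.natDegree ≤ k) (y : ℝ) :
    p.eval y = Emap k y (fun m : Fin (k+1) => p.eval ((m:ℕ):ℝ)) := by
  rw [Emap_apply, lag_expand hp y, ← Fin.sum_univ_eq_sum_range
    (fun m => p.eval ((m:ℕ):ℝ) * (Lb k m).eval y)]
  exact Finset.sum_congr rfl fun m _ => mul_comm _ _

theorem Emap_cont (k : ℕ) : Continuous fun y => Emap k y :=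
  continuous_finset_sum _ fun m _ => ((Lb k (m:ℕ)).continuous_aeval).smul continuous_const

theorem Emap_norm_le (k : ℕ) (y : ℝ) :
    ‖Emap k y‖ ≤ ∑ m : Fin (k+1), |(Lb k (m:ℕ)).eval y| := by
  refine ContinuousLinearMap.opNorm_le_bound _ (Finset.sum_nonneg fun m _ => abs_nonneg _) ?_
  intro c
  rw [Emap_apply]
  calc ‖∑ m : Fin (k+1), (Lb k (m:ℕ)).eval y * c m‖
      ≤ ∑ m : Fin (k+1), ‖(Lb k (m:ℕ)).eval y * c m‖ := norm_sum_le _ _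
    _ ≤ ∑ m : Fin (k+1), |(Lb k (m:ℕ)).eval y| * ‖c‖ := by
        refine Finset.sum_le_sum fun m _ => ?_
        rw [norm_mul]
        exact mul_le_mul_of_nonneg_left (norm_le_pi_norm c m) (norm_nonneg _)
    _ = (∑ m : Fin (k+1), |(Lb k (m:ℕ)).eval y|) * ‖c‖ := (Finset.sum_mul _ _ _).symm

theorem Emap_jointly_cont (k : ℕ) :
    Continuous fun q : (Fin (k+1) → ℝ) × ℝ => Emap k q.2 q.1 := by
  have : (fun q : (Fin (k+1) → ℝ) × ℝ => Emap k q.2 q.1)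
      = fun q : (Fin (k+1) → ℝ) × ℝ => ∑ m : Fin (k+1), (Lb k (m:ℕ)).eval q.2 * q.1 m := by
    funext q; rw [Emap_apply]
  rw [this]
  exact continuous_finset_sum _ fun m _ =>
    (((Lb k (m:ℕ)).continuous_aeval).comp continuous_snd).mul
      ((continuous_apply m).comp continuous_fst)

/-- time differentiation of `∫ V(u)` over one element -/
theorem hasDeriv_intV {α β : ℝ} {f V : ℝ → ℝ} (hf : Continuous f)
    (hV : ∀ y : ℝ, HasDerivAt V (f y) y)
    {k : ℕ} {T : ℝ} {P Pt : ℝ → Polynomial ℝ} {t : ℝ} (ht : t ∈ Set.Icc (0:ℝ) T)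
    (hdeg : ∀ s ∈ Set.Icc (0:ℝ) T, (P s).natDegree ≤ k) (hdegt : (Pt t).natDegree ≤ k)
    (hd : ∀ y : ℝ, HasDerivWithinAt (fun s => (P s).eval y) ((Pt t).eval y)
      (Set.Icc (0:ℝ) T) t) :
    HasDerivWithinAt (fun s => ∫ y in α..β, V ((P s).eval y))
      (∫ y in α..β, f ((P t).eval y) * (Pt t).eval y) (Set.Icc (0:ℝ) T) t := by
  have hVc : Continuous V := by
    rw [continuous_iff_continuousAt]; exact fun y => (hV y).continuousAt
  set c₀ : Fin (k+1) → ℝ := fun m => (P t).eval ((m:ℕ):ℝ) with hc₀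
  set F' : (Fin (k+1) → ℝ) → ℝ → ((Fin (k+1) → ℝ) →L[ℝ] ℝ) :=
    fun c y => f (Emap k y c) • Emap k y with hF'
  -- bounds
  obtain ⟨C1, hC1⟩ : ∃ C1, ∀ q ∈ (Metric.closedBall c₀ 1) ×ˢ (Set.uIcc α β),
      ‖f (Emap k q.2 q.1)‖ ≤ C1 := by
    apply IsCompact.exists_bound_of_continuousOn
      ((isCompact_closedBall c₀ 1).prod isCompact_uIcc)
    exact (hf.comp (Emap_jointly_cont k)).continuousOn
  obtain ⟨C2, hC2⟩ : ∃ C2, ∀ y ∈ Set.uIcc α β, ‖(∑ m : Fin (k+1), |(Lb k (m:ℕ)).eval y|)‖ ≤ C2 := by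
    exact IsCompact.exists_bound_of_continuousOn isCompact_uIcc
      (Continuous.continuousOn (continuous_finset_sum _ fun m _ =>
        ((Lb k (m:ℕ)).continuous_aeval).abs))
  have hbd : ∀ y ∈ Set.uIoc α β, ∀ c ∈ Metric.ball c₀ 1, ‖F' c y‖ ≤ C1 * C2 := by
    intro y hy c hc
    have hy' : y ∈ Set.uIcc α β := Set.uIoc_subset_uIcc hy
    have hc' : c ∈ Metric.closedBall c₀ 1 := Metric.ball_subset_closedBall hc
    show ‖f (Emap k y c) • Emap k y‖ ≤ C1 * C2
    have h1 : ‖f (Emap k y c)‖ ≤ C1 := hC1 (c, y) (Set.mk_mem_prod hc' hy')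
    have h2 : ‖Emap k y‖ ≤ C2 := by
      refine le_trans (Emap_norm_le k y) ?_
      have := hC2 y hy'
      rwa [Real.norm_eq_abs, abs_of_nonneg (Finset.sum_nonneg fun m _ => abs_nonneg _)] at this
    exact le_trans (ContinuousLinearMap.opNorm_smul_le _ _)
      (mul_le_mul h1 h2 (norm_nonneg _) ((norm_nonneg _).trans h1))
  -- differentiability in the coefficients
  have hdiff : ∀ y : ℝ, ∀ c : Fin (k+1) → ℝ,
      HasFDerivAt (fun c => V (Emap k y c)) (F' c y) c := by
    intro y c
    have h1 : HasFDerivAt (fun c => Emap k y c) (Emap k y) c := (Emap k y).hasFDerivAt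
    have h2 : HasDerivAt V (f (Emap k y c)) (Emap k y c) := hV _
    have := HasDerivAt.comp_hasFDerivAt c h2 h1
    exact this
  -- the parametric integral
  have main : HasFDerivAt (fun c => ∫ y in α..β, V (Emap k y c))
      (∫ y in α..β, F' c₀ y) c₀ := by
    apply intervalIntegral.hasFDerivAt_integral_of_dominated_of_fderiv_le
      (bound := fun _ => C1 * C2) (Metric.ball_mem_nhds _ one_pos)
    · filter_upwards with c
      exact ((hVc.comp ((Emap_jointly_cont k).comp
        ((Continuous.prodMk continuous_const continuous_id)))).aestronglyMeasurable)
    · exact (hVc.comp ((Emap_jointly_cont k).comp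
        ((Continuous.prodMk continuous_const continuous_id)))).intervalIntegrable _ _
    · apply Continuous.aestronglyMeasurable
      exact ((hf.comp ((Emap_jointly_cont k).comp ((Continuous.prodMk continuous_const continuous_id)))).smul (Emap_cont k))
    · exact MeasureTheory.ae_of_all _ fun y hy c hc => hbd y hy c hc
    · exact intervalIntegrable_const
    · exact MeasureTheory.ae_of_all _ fun y _ c _ => hdiff y c
  -- compose with the coefficient path
  set c' : Fin (k+1) → ℝ := fun m => (Pt t).eval ((m:ℕ):ℝ) with hc'
  have hpath : HasDerivWithinAt (fun s => (fun m : Fin (k+1) => ((P s).eval ((m:ℕ):ℝ))))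
      c' (Set.Icc (0:ℝ) T) t := by
    rw [hasDerivWithinAt_iff_hasFDerivWithinAt]
    apply hasFDerivWithinAt_pi''
    intro m
    have := (hd ((m:ℕ):ℝ)).hasFDerivWithinAt
    exact this.congr_fderiv (by ext; simp [c'])
  have comp := main.comp_hasDerivWithinAt t hpath
  have hval : (∫ y in α..β, F' c₀ y) c' = ∫ y in α..β, f ((P t).eval y) * (Pt t).eval y := by
    rw [ContinuousLinearMap.intervalIntegral_apply]
    · refine intervalIntegral.integral_congr fun y _ => ?_
      rw [hF']
      simp only [ContinuousLinearMap.smul_apply, smul_eq_mul]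
      rw [← eval_eq_Emap hdegt y, ← eval_eq_Emap (hdeg t ht) y]
    · exact ((hf.comp ((Emap_jointly_cont k).comp ((Continuous.prodMk continuous_const continuous_id)))).smul
        (Emap_cont k)).intervalIntegrable _ _
  rw [hval] at comp
  refine comp.congr (fun s hs => ?_) ?_
  · show (∫ y in α..β, V ((P s).eval y))
        = ∫ y in α..β, V (Emap k y (fun m : Fin (k+1) => (P s).eval ((m:ℕ):ℝ)))
    exact intervalIntegral.integral_congr fun y _ => by rw [← eval_eq_Emap (hdeg s hs) y]
  · show (∫ y in α..β, V ((P t).eval y))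
        = ∫ y in α..β, V (Emap k y (fun m : Fin (k+1) => (P t).eval ((m:ℕ):ℝ)))
    exact intervalIntegral.integral_congr fun y _ => by rw [← eval_eq_Emap (hdeg t ht) y]

end DGAux



namespace DGAux
open DG Polynomial

variable {x : ℕ → ℝ} {N k : ℕ} {T : ℝ}

theorem deg_dx {P : Broken} (hP : DegLE k P) : DegLE k (dx P) := fun i =>
  le_trans (Polynomial.natDegree_derivative_le _) (le_trans (Nat.sub_le _ _) (hP i))

theorem jmp_one (i : ℕ) : jmp x N (fun _ => (1:Polynomial ℝ)) i = 0 := by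
  unfold jmp lv rv
  by_cases h : i = N <;> simp [h]

theorem ip_zero_right (F : ℕ → ℝ → ℝ) : ip x N F (ev (fun _ => (0:Polynomial ℝ))) = 0 := by
  simp [ip, ev]

theorem sum_mul_comm (F G : ℕ → ℝ) :
    ∑ i ∈ Finset.Icc 1 N, F i * G i = ∑ i ∈ Finset.Icc 1 N, G i * F i :=
  Finset.sum_congr rfl fun i _ => mul_comm _ _

theorem bt_avg (hN : 1 ≤ N) {φ : ℕ → ℝ} (hφtr : φ 0 = φ N) {P : Broken}
    (hφ : ∀ i ∈ Finset.Icc 1 N, φ i = avg x N P i) (v : Broken) :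
    bt x N φ v = ∑ i ∈ Finset.Icc 1 N, avg x N P i * jmp x N v i := by
  rw [bt_eq hN φ hφtr v]
  exact Finset.sum_congr rfl fun i hi => by rw [hφ i hi]

theorem bt_avg_tau (hN : 1 ≤ N) {φ : ℕ → ℝ} (hφtr : φ 0 = φ N) {P U : Broken} {τ : ℝ}
    (hφ : ∀ i ∈ Finset.Icc 1 N, φ i = avg x N P i + τ * jmp x N U i) (v : Broken) :
    bt x N φ v = (∑ i ∈ Finset.Icc 1 N, avg x N P i * jmp x N v i)
      + τ * ∑ i ∈ Finset.Icc 1 N, jmp x N U i * jmp x N v i := by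
  rw [bt_eq hN φ hφtr v, Finset.mul_sum, ← Finset.sum_add_distrib]
  refine Finset.sum_congr rfl fun i hi => by rw [hφ i hi]; ring

theorem ip_dx_add' (hN : 1 ≤ N) (P Q : Broken) :
    ip x N (ev P) (ev (dx Q)) + ip x N (ev (dx P)) (ev Q)
      = (∑ i ∈ Finset.Icc 1 N, avg x N P i * jmp x N Q i)
        + ∑ i ∈ Finset.Icc 1 N, jmp x N P i * avg x N Q i := by
  rw [ip_dx_add hN P Q, Finset.sum_add_distrib]

theorem ip_dx_self (hN : 1 ≤ N) (P : Broken) :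
    ip x N (ev P) (ev (dx P)) = ∑ i ∈ Finset.Icc 1 N, avg x N P i * jmp x N P i := by
  have h := ip_dx_add' (x := x) hN P P
  have h2 : ip x N (ev (dx P)) (ev P) = ip x N (ev P) (ev (dx P)) := ip_symm _ _
  have h3 : (∑ i ∈ Finset.Icc 1 N, jmp x N P i * avg x N P i)
      = ∑ i ∈ Finset.Icc 1 N, avg x N P i * jmp x N P i := sum_mul_comm _ _
  linarith

theorem proj_ip {f : ℝ → ℝ} (hf : Continuous f) {P Pf : Broken}
    (hproj : ∀ i ∈ Finset.Icc 1 N, ∀ w : Polynomial ℝ, w.natDegree ≤ k →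
      (∫ y in (x (i-1))..(x i), ((Pf i).eval y - f ((P i).eval y)) * w.eval y) = 0)
    (z : Broken) (hz : DegLE k z) :
    ip x N (fun i y => f ((P i).eval y)) (ev z) = ip x N (ev Pf) (ev z) := by
  unfold ip
  refine Finset.sum_congr rfl fun i hi => ?_
  have h0 := hproj i hi (z i) (hz i)
  have int1 : IntervalIntegrable (fun y => (Pf i).eval y * (z i).eval y)
      MeasureTheory.volume (x (i-1)) (x i) :=
    (((Pf i).continuous_aeval).mul ((z i).continuous_aeval)).intervalIntegrable _ _
  have int2 : IntervalIntegrable (fun y => f ((P i).eval y) * (z i).eval y)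
      MeasureTheory.volume (x (i-1)) (x i) :=
    ((hf.comp ((P i).continuous_aeval)).mul ((z i).continuous_aeval)).intervalIntegrable _ _
  have hsplit : (∫ y in (x (i-1))..(x i), ((Pf i).eval y - f ((P i).eval y)) * (z i).eval y)
      = (∫ y in (x (i-1))..(x i), (Pf i).eval y * (z i).eval y)
        - ∫ y in (x (i-1))..(x i), f ((P i).eval y) * (z i).eval y := by
    rw [← intervalIntegral.integral_sub int1 int2]
    exact intervalIntegral.integral_congr fun y _ => by ring
  have := hsplit ▸ h0
  have : (∫ y in (x (i-1))..(x i), f ((P i).eval y) * (z i).eval y)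
      = ∫ y in (x (i-1))..(x i), (Pf i).eval y * (z i).eval y := by linarith
  exact this

theorem natDegree_le_of_hasDeriv (hT : 0 < T) {t : ℝ} (ht : t ∈ Set.Icc (0:ℝ) T)
    {P : ℝ → Polynomial ℝ} {Q : Polynomial ℝ}
    (hdeg : ∀ s ∈ Set.Icc (0:ℝ) T, (P s).natDegree ≤ k)
    (hd : ∀ y : ℝ, HasDerivWithinAt (fun s => (P s).eval y) (Q.eval y) (Set.Icc (0:ℝ) T) t) :
    Q.natDegree ≤ k := by
  have hy : ∀ y : ℝ, Q.eval y = ∑ m ∈ Finset.range (k+1), Q.eval (m:ℝ) * (Lb k m).eval y := by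
    intro y
    have hΦ : ∀ s ∈ Set.Icc (0:ℝ) T, ((P s).eval y
        - ∑ m ∈ Finset.range (k+1), (P s).eval (m:ℝ) * (Lb k m).eval y) = 0 := by
      intro s hs
      rw [← lag_expand (hdeg s hs) y]
      ring
    have hD : HasDerivWithinAt
        (fun s => (P s).eval y - ∑ m ∈ Finset.range (k+1), (P s).eval (m:ℝ) * (Lb k m).eval y)
        (Q.eval y - ∑ m ∈ Finset.range (k+1), Q.eval (m:ℝ) * (Lb k m).eval y)
        (Set.Icc (0:ℝ) T) t := by
      exact (hd y).sub (HasDerivWithinAt.fun_sum fun m _ => (hd (m:ℝ)).mul_const _)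
    have := deriv_of_zero hT ht hΦ hD
    linarith
  have hQR : Q = Lagrange.interpolate (Finset.range (k+1)) (fun n : ℕ => (n:ℝ))
      (fun n => Q.eval ((n:ℕ):ℝ)) := by
    apply Polynomial.funext
    intro y
    rw [hy y, Lagrange.interpolate_apply, Polynomial.eval_finset_sum]
    refine Finset.sum_congr rfl fun m _ => ?_
    rw [Polynomial.eval_mul, Polynomial.eval_C]
    rfl
  have hdeg' : Q.degree < ((k:ℕ)+1 : ℕ) := by
    rw [hQR]
    have := Lagrange.degree_interpolate_lt (s := Finset.range (k+1))
      (v := fun n : ℕ => (n:ℝ)) (r := fun n => Q.eval ((n:ℕ):ℝ))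
      (fun a _ b _ h => Nat.cast_injective h)
    simpa using this
  by_cases hQ0 : Q = 0
  · simp [hQ0]
  · have := (Polynomial.natDegree_lt_iff_degree_lt hQ0).mpr (by exact_mod_cast hdeg')
    omega

end DGAux

set_option maxHeartbeats 1000000 in
/-- Theorem 2.1: the DG scheme with the implicitly defined stabilization parameters
`τ_qu`, `τ_pu` conserves the mass, the energy and the Hamiltonian. -/
theorem dg_full_conservation
    (a b : ℝ) (N k : ℕ) (x : ℕ → ℝ) (hmesh : DG.Mesh a b N x)
    (T ε : ℝ) (hT : 0 < T) (f V : ℝ → ℝ) (hf : Continuous f)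
    (hV : ∀ y : ℝ, HasDerivAt V (f y) y)
    (u q p ut qt pt : ℝ → DG.Broken) (uh qh ph : ℝ → ℕ → ℝ)
    (hS : DG.Scheme x N k T ε f u q p ut qt pt uh qh ph)
    (Pf : ℝ → DG.Broken)
    (hPf : ∀ t ∈ Set.Icc (0:ℝ) T, DG.IsProj x N k f (u t) (Pf t))
    (τqu τpu : ℝ → ℝ)
    -- the numerical traces (2.4): û_h = {u_h}, q̂_h = {q_h} + τ_qu⟦u_h⟧,
    -- p̂_h = {p_h} + τ_pu⟦u_h⟧ at every node
    (huh : ∀ t ∈ Set.Icc (0:ℝ) T, ∀ i ∈ Finset.Icc 1 N,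
      uh t i = DG.avg x N (u t) i)
    (hqh : ∀ t ∈ Set.Icc (0:ℝ) T, ∀ i ∈ Finset.Icc 1 N,
      qh t i = DG.avg x N (q t) i + τqu t * DG.jmp x N (u t) i)
    (hph : ∀ t ∈ Set.Icc (0:ℝ) T, ∀ i ∈ Finset.Icc 1 N,
      ph t i = DG.avg x N (p t) i + τpu t * DG.jmp x N (u t) i)
    -- constraint (a), equation (2.5a)
    (hconsA : ∀ t ∈ Set.Icc (0:ℝ) T,
      τpu t * (∑ i ∈ Finset.Icc 1 N, DG.jmp x N (u t) i ^ 2)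
        - ε * τqu t * (∑ i ∈ Finset.Icc 1 N, DG.jmp x N (u t) i * DG.jmp x N (q t) i)
        = ∑ i ∈ Finset.Icc 1 N,
            (DG.jmpC x N V (u t) i - DG.avg x N (Pf t) i * DG.jmp x N (u t) i))
    -- constraint (b), equation (2.5b)
    (hconsB : ∀ t ∈ Set.Icc (0:ℝ) T,
      τpu t * (∑ i ∈ Finset.Icc 1 N, DG.jmp x N (p t) i * DG.jmp x N (u t) i)
        + ε * τqu t * (∑ i ∈ Finset.Icc 1 N, DG.jmp x N (ut t) i * DG.jmp x N (u t) i)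
        = 0) :
    ∀ t₁ ∈ Set.Icc (0:ℝ) T, ∀ t₂ ∈ Set.Icc (0:ℝ) T,
      ((∑ i ∈ Finset.Icc 1 N, ∫ y in (x (i-1))..(x i), ((u t₁) i).eval y)
          = ∑ i ∈ Finset.Icc 1 N, ∫ y in (x (i-1))..(x i), ((u t₂) i).eval y)
      ∧ ((∑ i ∈ Finset.Icc 1 N, ∫ y in (x (i-1))..(x i), ((u t₁) i).eval y ^ 2)
          = ∑ i ∈ Finset.Icc 1 N, ∫ y in (x (i-1))..(x i), ((u t₂) i).eval y ^ 2)
      ∧ ((∑ i ∈ Finset.Icc 1 N, ∫ y in (x (i-1))..(x i),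
            ((ε/2) * ((q t₁) i).eval y ^ 2 - V (((u t₁) i).eval y)))
          = ∑ i ∈ Finset.Icc 1 N, ∫ y in (x (i-1))..(x i),
              ((ε/2) * ((q t₂) i).eval y ^ 2 - V (((u t₂) i).eval y))) := by
  classical
  have hN : 1 ≤ N := hmesh.hN
  have hVc : Continuous V := by
    rw [continuous_iff_continuousAt]; exact fun y => (hV y).continuousAt
  have hqtdeg : ∀ t ∈ Set.Icc (0:ℝ) T, DG.DegLE k (qt t) := fun t ht i =>
    DGAux.natDegree_le_of_hasDeriv hT ht (fun s hs => hS.degq s hs i) (fun y => hS.dq t ht i y)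
  have hzdeg : DG.DegLE k (fun _ : ℕ => (0:Polynomial ℝ)) := fun i => by simp [DG.DegLE]
  have honedeg : DG.DegLE k (fun _ : ℕ => (1:Polynomial ℝ)) := fun i => by simp [DG.DegLE]
  have hconstD : ∀ (t : ℝ) (W : DG.Broken) (i : ℕ) (y : ℝ),
      HasDerivWithinAt (fun _ : ℝ => ((W i).eval y))
        (((fun _ : ℕ => (0:Polynomial ℝ)) i).eval y) (Set.Icc (0:ℝ) T) t := by
    intro t W i y
    simpa using hasDerivWithinAt_const t (Set.Icc (0:ℝ) T) ((W i).eval y)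
  -- numerical-trace rewrites
  have btu : ∀ t ∈ Set.Icc (0:ℝ) T, ∀ v : DG.Broken, DG.bt x N (uh t) v
      = ∑ i ∈ Finset.Icc 1 N, DG.avg x N (u t) i * DG.jmp x N v i :=
    fun t ht v => DGAux.bt_avg hN (hS.trace_u t ht) (huh t ht) v
  have btq : ∀ t ∈ Set.Icc (0:ℝ) T, ∀ v : DG.Broken, DG.bt x N (qh t) v
      = (∑ i ∈ Finset.Icc 1 N, DG.avg x N (q t) i * DG.jmp x N v i)
        + τqu t * ∑ i ∈ Finset.Icc 1 N, DG.jmp x N (u t) i * DG.jmp x N v i :=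
    fun t ht v => DGAux.bt_avg_tau hN (hS.trace_q t ht) (hqh t ht) v
  have btp : ∀ t ∈ Set.Icc (0:ℝ) T, ∀ v : DG.Broken, DG.bt x N (ph t) v
      = (∑ i ∈ Finset.Icc 1 N, DG.avg x N (p t) i * DG.jmp x N v i)
        + τpu t * ∑ i ∈ Finset.Icc 1 N, DG.jmp x N (u t) i * DG.jmp x N v i :=
    fun t ht v => DGAux.bt_avg_tau hN (hS.trace_p t ht) (hph t ht) v
  -- key identity for mass conservation
  have keyMass : ∀ t ∈ Set.Icc (0:ℝ) T,
      DG.ip x N (DG.ev (ut t)) (DG.ev (fun _ => (1:Polynomial ℝ))) = 0 := by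
    intro t ht
    have E3 := hS.eq3 t ht (fun _ => (1:Polynomial ℝ)) honedeg
    have hdx1 : DG.ip x N (DG.ev (p t)) (DG.ev (DG.dx (fun _ => (1:Polynomial ℝ)))) = 0 := by
      have e : DG.dx (fun _ : ℕ => (1:Polynomial ℝ)) = fun _ => (0:Polynomial ℝ) := by
        funext i; simp [DG.dx]
      rw [e, DGAux.ip_zero_right]
    have hbt1 : DG.bt x N (ph t) (fun _ => (1:Polynomial ℝ)) = 0 := by
      rw [btp t ht]
      simp [DGAux.jmp_one]
    linarith
  -- key identity for energy conservation
  have keyEnergy : ∀ t ∈ Set.Icc (0:ℝ) T,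
      DG.ip x N (DG.ev (ut t)) (DG.ev (u t)) = 0 := by
    intro t ht
    have hU := hS.degu t ht
    have hQ := hS.degq t ht
    have hP := hS.degp t ht
    have h1 := hS.eq3 t ht (u t) hU
    have h2 := btp t ht (u t)
    have h3 := DGAux.ip_dx_add' (x := x) hN (p t) (u t)
    have h4 : DG.ip x N (DG.ev (DG.dx (p t))) (DG.ev (u t))
        = DG.ip x N (DG.ev (u t)) (DG.ev (DG.dx (p t))) := DGAux.ip_symm _ _
    have h5 := hS.eq1 t ht (p t) hP
    have h6 := btu t ht (p t)
    have h7 : (∑ i ∈ Finset.Icc 1 N, DG.jmp x N (p t) i * DG.avg x N (u t) i)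
        = ∑ i ∈ Finset.Icc 1 N, DG.avg x N (u t) i * DG.jmp x N (p t) i :=
      DGAux.sum_mul_comm _ _
    have h8 := hS.eq2 t ht (q t) hQ
    have h9 := btq t ht (q t)
    have h10 := DGAux.ip_dx_self (x := x) hN (q t)
    have h11 : DG.ip x N (DG.ev (q t)) (DG.ev (p t))
        = DG.ip x N (DG.ev (p t)) (DG.ev (q t)) := DGAux.ip_symm _ _
    have h12 : DG.ip x N (fun i y => f (((u t) i).eval y)) (DG.ev (q t))
        = DG.ip x N (DG.ev (Pf t)) (DG.ev (q t)) := DGAux.proj_ip hf (hPf t ht).2 _ hQ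
    have h13 : DG.ip x N (DG.ev (Pf t)) (DG.ev (q t))
        = DG.ip x N (DG.ev (q t)) (DG.ev (Pf t)) := DGAux.ip_symm _ _
    have h14 := hS.eq1 t ht (Pf t) (hPf t ht).1
    have h15 := btu t ht (Pf t)
    have h16 := DGAux.ip_dx_add' (x := x) hN (u t) (Pf t)
    have h17 : DG.ip x N (fun i y => f (((u t) i).eval y)) (DG.ev (DG.dx (u t)))
        = DG.ip x N (DG.ev (Pf t)) (DG.ev (DG.dx (u t))) :=
      DGAux.proj_ip hf (hPf t ht).2 _ (DGAux.deg_dx hU)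
    have h18 : DG.ip x N (DG.ev (Pf t)) (DG.ev (DG.dx (u t)))
        = DG.ip x N (DG.ev (DG.dx (u t))) (DG.ev (Pf t)) := DGAux.ip_symm _ _
    have h19 := DGAux.ftcV (x := x) hN hf hV (u t)
    have h20 := hconsA t ht
    have h20' : (∑ i ∈ Finset.Icc 1 N, DG.jmp x N (u t) i ^ 2)
        = ∑ i ∈ Finset.Icc 1 N, DG.jmp x N (u t) i * DG.jmp x N (u t) i :=
      Finset.sum_congr rfl fun i _ => sq _
    have h20'' : (∑ i ∈ Finset.Icc 1 N,
          (DG.jmpC x N V (u t) i - DG.avg x N (Pf t) i * DG.jmp x N (u t) i))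
        = (∑ i ∈ Finset.Icc 1 N, DG.jmpC x N V (u t) i)
          - ∑ i ∈ Finset.Icc 1 N, DG.avg x N (Pf t) i * DG.jmp x N (u t) i :=
      Finset.sum_sub_distrib _ _
    have h21 : (∑ i ∈ Finset.Icc 1 N, DG.avg x N (Pf t) i * DG.jmp x N (u t) i)
        = ∑ i ∈ Finset.Icc 1 N, DG.jmp x N (u t) i * DG.avg x N (Pf t) i :=
      DGAux.sum_mul_comm _ _
    linear_combination h1 - h2 + h3 - h4 - h5 - h6 + h7 + h8 + ε * h9 - ε * h10 + h11 + h12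
      + h13 + h14 + h15 - h16 - h17 - h18 + h19 - h20 + (τpu t) * h20' - h20'' + h21
  -- key identity for Hamiltonian conservation
  have keyHam : ∀ t ∈ Set.Icc (0:ℝ) T,
      ε * DG.ip x N (DG.ev (qt t)) (DG.ev (q t))
        - DG.ip x N (fun i y => f (((u t) i).eval y)) (DG.ev (ut t)) = 0 := by
    intro t ht
    have hU := hS.degu t ht
    have hQ := hS.degq t ht
    have hP := hS.degp t ht
    have hUt := hS.degut t ht
    -- the first scheme equation differentiated in time, with test function v = q t
    have hd1 : HasDerivWithinAt (fun s => DG.ip x N (DG.ev (q s)) (DG.ev (q t)))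
        (DG.ip x N (DG.ev (qt t)) (DG.ev (q t))
          + DG.ip x N (DG.ev (q t)) (DG.ev (fun _ => (0:Polynomial ℝ))))
        (Set.Icc (0:ℝ) T) t :=
      DGAux.hasDeriv_ip (x := x) (N := N) (P := q) (Pt := qt) (Q := fun _ => q t)
        (Qt := fun _ _ => (0:Polynomial ℝ)) hS.degq (fun s _ => hQ) ht (hqtdeg t ht) hzdeg
        (hS.dq t ht) (hconstD t (q t))
    have hd2 : HasDerivWithinAt (fun s => DG.ip x N (DG.ev (u s)) (DG.ev (DG.dx (q t))))
        (DG.ip x N (DG.ev (ut t)) (DG.ev (DG.dx (q t)))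
          + DG.ip x N (DG.ev (u t)) (DG.ev (fun _ => (0:Polynomial ℝ))))
        (Set.Icc (0:ℝ) T) t :=
      DGAux.hasDeriv_ip (x := x) (N := N) (P := u) (Pt := ut) (Q := fun _ => DG.dx (q t))
        (Qt := fun _ _ => (0:Polynomial ℝ)) hS.degu (fun s _ => DGAux.deg_dx hQ) ht hUt hzdeg
        (hS.du t ht) (hconstD t (DG.dx (q t)))
    have hd3 : HasDerivWithinAt
        (fun s => ∑ i ∈ Finset.Icc 1 N, DG.avg x N (u s) i * DG.jmp x N (q t) i)
        (∑ i ∈ Finset.Icc 1 N, DG.avg x N (ut t) i * DG.jmp x N (q t) i)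
        (Set.Icc (0:ℝ) T) t :=
      HasDerivWithinAt.fun_sum fun i _ => (DGAux.hasDeriv_avg i (hS.du t ht)).mul_const _
    have hΦ : ∀ s ∈ Set.Icc (0:ℝ) T,
        (DG.ip x N (DG.ev (q s)) (DG.ev (q t)) + DG.ip x N (DG.ev (u s)) (DG.ev (DG.dx (q t)))
          - ∑ i ∈ Finset.Icc 1 N, DG.avg x N (u s) i * DG.jmp x N (q t) i) = 0 := by
      intro s hs
      have e1 := hS.eq1 s hs (q t) hQ
      have e2 := btu s hs (q t)
      linarith
    have hD0 := DGAux.deriv_of_zero hT ht hΦ ((hd1.add hd2).sub hd3)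
    have hz1 : DG.ip x N (DG.ev (q t)) (DG.ev (fun _ => (0:Polynomial ℝ))) = 0 :=
      DGAux.ip_zero_right _
    have hz2 : DG.ip x N (DG.ev (u t)) (DG.ev (fun _ => (0:Polynomial ℝ))) = 0 :=
      DGAux.ip_zero_right _
    have dE1 : DG.ip x N (DG.ev (qt t)) (DG.ev (q t))
        + DG.ip x N (DG.ev (ut t)) (DG.ev (DG.dx (q t)))
        - ∑ i ∈ Finset.Icc 1 N, DG.avg x N (ut t) i * DG.jmp x N (q t) i = 0 := by
      linarith
    -- remaining algebraic facts
    have g2 := hS.eq2 t ht (ut t) hUt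
    have g3 := btq t ht (ut t)
    have g4 := hS.eq3 t ht (p t) hP
    have g5 := btp t ht (p t)
    have g6 := DGAux.ip_dx_self (x := x) hN (p t)
    have g7 := DGAux.ip_dx_add' (x := x) hN (ut t) (q t)
    have g8 : DG.ip x N (DG.ev (DG.dx (ut t))) (DG.ev (q t))
        = DG.ip x N (DG.ev (q t)) (DG.ev (DG.dx (ut t))) := DGAux.ip_symm _ _
    have g9 : DG.ip x N (DG.ev (ut t)) (DG.ev (p t))
        = DG.ip x N (DG.ev (p t)) (DG.ev (ut t)) := DGAux.ip_symm _ _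
    have g10 : (∑ i ∈ Finset.Icc 1 N, DG.jmp x N (ut t) i * DG.avg x N (q t) i)
        = ∑ i ∈ Finset.Icc 1 N, DG.avg x N (q t) i * DG.jmp x N (ut t) i :=
      DGAux.sum_mul_comm _ _
    have g11 := hconsB t ht
    have g12 : (∑ i ∈ Finset.Icc 1 N, DG.jmp x N (p t) i * DG.jmp x N (u t) i)
        = ∑ i ∈ Finset.Icc 1 N, DG.jmp x N (u t) i * DG.jmp x N (p t) i :=
      DGAux.sum_mul_comm _ _
    have g13 : (∑ i ∈ Finset.Icc 1 N, DG.jmp x N (ut t) i * DG.jmp x N (u t) i)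
        = ∑ i ∈ Finset.Icc 1 N, DG.jmp x N (u t) i * DG.jmp x N (ut t) i :=
      DGAux.sum_mul_comm _ _
    linear_combination ε * dE1 + g2 + ε * g3 - g4 + g5 - g6 - ε * g7 + ε * g8 + g9 - ε * g10
      + g11 - τpu t * g12 - ε * τqu t * g13
  -- mass conservation
  have massConst : ∀ t₁ ∈ Set.Icc (0:ℝ) T, ∀ t₂ ∈ Set.Icc (0:ℝ) T,
      (fun s => ∑ i ∈ Finset.Icc 1 N, ∫ y in (x (i-1))..(x i), ((u s) i).eval y) t₁
        = (fun s => ∑ i ∈ Finset.Icc 1 N, ∫ y in (x (i-1))..(x i), ((u s) i).eval y) t₂ := by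
    apply DGAux.const_of_deriv_zero hT
    intro t ht
    have hd := DGAux.hasDeriv_ip (x := x) (N := N) (P := u) (Pt := ut)
      (Q := fun _ _ => (1:Polynomial ℝ)) (Qt := fun _ _ => (0:Polynomial ℝ))
      hS.degu (fun s _ => honedeg) ht
      (hS.degut t ht) hzdeg (hS.du t ht) (hconstD t (fun _ => (1:Polynomial ℝ)))
    have hval : DG.ip x N (DG.ev (ut t)) (DG.ev (fun _ => (1:Polynomial ℝ)))
        + DG.ip x N (DG.ev (u t)) (DG.ev (fun _ => (0:Polynomial ℝ))) = 0 := by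
      rw [DGAux.ip_zero_right]
      have := keyMass t ht
      linarith
    rw [hval] at hd
    have e0 : ∀ s : ℝ, (∑ i ∈ Finset.Icc 1 N, ∫ y in (x (i-1))..(x i), ((u s) i).eval y)
        = DG.ip x N (DG.ev (u s)) (DG.ev (fun _ => (1:Polynomial ℝ))) := by
      intro s
      unfold DG.ip DG.ev
      exact Finset.sum_congr rfl fun i _ =>
        intervalIntegral.integral_congr fun y _ => by simp
    exact hd.congr (fun s _ => e0 s) (e0 t)
  -- energy conservation
  have energyConst : ∀ t₁ ∈ Set.Icc (0:ℝ) T, ∀ t₂ ∈ Set.Icc (0:ℝ) T,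
      (fun s => ∑ i ∈ Finset.Icc 1 N, ∫ y in (x (i-1))..(x i), ((u s) i).eval y ^ 2) t₁
        = (fun s => ∑ i ∈ Finset.Icc 1 N, ∫ y in (x (i-1))..(x i), ((u s) i).eval y ^ 2) t₂ := by
    apply DGAux.const_of_deriv_zero hT
    intro t ht
    have hd := DGAux.hasDeriv_ip (x := x) (N := N) (P := u) (Pt := ut) (Q := u) (Qt := ut)
      hS.degu hS.degu ht
      (hS.degut t ht) (hS.degut t ht) (hS.du t ht) (hS.du t ht)
    have hval : DG.ip x N (DG.ev (ut t)) (DG.ev (u t))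
        + DG.ip x N (DG.ev (u t)) (DG.ev (ut t)) = 0 := by
      have hsymm : DG.ip x N (DG.ev (u t)) (DG.ev (ut t))
          = DG.ip x N (DG.ev (ut t)) (DG.ev (u t)) := DGAux.ip_symm _ _
      have := keyEnergy t ht
      linarith
    rw [hval] at hd
    have e0 : ∀ s : ℝ, (∑ i ∈ Finset.Icc 1 N, ∫ y in (x (i-1))..(x i), ((u s) i).eval y ^ 2)
        = DG.ip x N (DG.ev (u s)) (DG.ev (u s)) := by
      intro s
      unfold DG.ip DG.ev
      exact Finset.sum_congr rfl fun i _ =>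
        intervalIntegral.integral_congr fun y _ => by rw [pow_two]
    exact hd.congr (fun s _ => e0 s) (e0 t)
  -- Hamiltonian conservation
  have hamConst : ∀ t₁ ∈ Set.Icc (0:ℝ) T, ∀ t₂ ∈ Set.Icc (0:ℝ) T,
      (fun s => ∑ i ∈ Finset.Icc 1 N, ∫ y in (x (i-1))..(x i),
          ((ε/2) * ((q s) i).eval y ^ 2 - V (((u s) i).eval y))) t₁
        = (fun s => ∑ i ∈ Finset.Icc 1 N, ∫ y in (x (i-1))..(x i),
          ((ε/2) * ((q s) i).eval y ^ 2 - V (((u s) i).eval y))) t₂ := by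
    apply DGAux.const_of_deriv_zero hT
    intro t ht
    have hdq := DGAux.hasDeriv_ip (x := x) (N := N) (P := q) (Pt := qt) (Q := q) (Qt := qt)
      hS.degq hS.degq ht
      (hqtdeg t ht) (hqtdeg t ht) (hS.dq t ht) (hS.dq t ht)
    have part1 := hdq.const_mul (ε/2)
    have part2 : HasDerivWithinAt
        (fun s => ∑ i ∈ Finset.Icc 1 N, ∫ y in (x (i-1))..(x i), V (((u s) i).eval y))
        (∑ i ∈ Finset.Icc 1 N, ∫ y in (x (i-1))..(x i),
          f (((u t) i).eval y) * ((ut t) i).eval y)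
        (Set.Icc (0:ℝ) T) t :=
      HasDerivWithinAt.fun_sum fun i _ =>
        DGAux.hasDeriv_intV (α := x (i-1)) (β := x i) (P := fun s => u s i)
          (Pt := fun s => ut s i) hf hV ht (fun s hs => hS.degu s hs i) (hS.degut t ht i)
          (fun y => hS.du t ht i y)
    have hdG := part1.sub part2
    have esum : (∑ i ∈ Finset.Icc 1 N, ∫ y in (x (i-1))..(x i),
          f (((u t) i).eval y) * ((ut t) i).eval y)
        = DG.ip x N (fun i y => f (((u t) i).eval y)) (DG.ev (ut t)) := rfl
    have hzero : (ε/2) * (DG.ip x N (DG.ev (qt t)) (DG.ev (q t))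
          + DG.ip x N (DG.ev (q t)) (DG.ev (qt t)))
        - (∑ i ∈ Finset.Icc 1 N, ∫ y in (x (i-1))..(x i),
            f (((u t) i).eval y) * ((ut t) i).eval y) = 0 := by
      have hsymm : DG.ip x N (DG.ev (q t)) (DG.ev (qt t))
          = DG.ip x N (DG.ev (qt t)) (DG.ev (q t)) := DGAux.ip_symm _ _
      have hk := keyHam t ht
      rw [esum]
      linear_combination hk + (ε/2) * hsymm
    rw [hzero] at hdG
    have hsplit : ∀ s : ℝ, (∑ i ∈ Finset.Icc 1 N, ∫ y in (x (i-1))..(x i),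
          ((ε/2) * ((q s) i).eval y ^ 2 - V (((u s) i).eval y)))
        = (ε/2) * DG.ip x N (DG.ev (q s)) (DG.ev (q s))
          - ∑ i ∈ Finset.Icc 1 N, ∫ y in (x (i-1))..(x i), V (((u s) i).eval y) := by
      intro s
      unfold DG.ip DG.ev
      rw [Finset.mul_sum, ← Finset.sum_sub_distrib]
      refine Finset.sum_congr rfl fun i _ => ?_
      have i1 : IntervalIntegrable (fun y => (ε/2) * ((q s) i).eval y ^ 2)
          MeasureTheory.volume (x (i-1)) (x i) :=
        (continuous_const.mul (((q s) i).continuous_aeval.pow 2)).intervalIntegrable _ _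
      have i2 : IntervalIntegrable (fun y => V (((u s) i).eval y))
          MeasureTheory.volume (x (i-1)) (x i) :=
        (hVc.comp ((u s) i).continuous_aeval).intervalIntegrable _ _
      rw [intervalIntegral.integral_sub i1 i2, intervalIntegral.integral_const_mul]
      congr 1
      congr 1
      exact intervalIntegral.integral_congr fun y _ => pow_two _
    exact hdG.congr (fun s _ => hsplit s) (hsplit t)
  refine fun t₁ ht₁ t₂ ht₂ =>
    ⟨massConst t₁ ht₁ t₂ ht₂, energyConst t₁ ht₁ t₂ ht₂, hamConst t₁ ht₁ t₂ ht₂⟩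
end
end
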